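/- arXiv:2002.06529 — 4 statements merged into one kernel-verified Lean document; each statement's English description precedes it below -/
import Mathlib

section
/- Let q ≥ 2 be an even integer, m ≥ 4 an integer, π a permutation of {0,1,…,m−3}, and c ∈ ℤ_q. For d ∈ {0,1} define ζ^d, η^d : {0,1}^{m−2} → {0,1} by ζ^d(x) = Σ_{α=0}^{m−4} x_{π(α)}·x_{π(α+1)} + d·x_{π(m−3)} (mod 2) and η^d(x) = Σ_{α=0}^{m−4} (1−x_{π(α)})·(1−x_{π(α+1)}) + (1−d)·(1−x_{π(m−3)}) + d (mod 2), and define g^d : {0,1}^m → ℤ_q by g^d(x) = (q/2)·[(1−x_{m−1})·x_{m−2}·ζ^d(x_0,…,x_{m−3}) + x_{m−1}·(1−x_{m−2})·η^d(x_0,…,x_{m−3}) + (1−d)·x_{m−1}·x_{m−2}] + c (mod q). Let ω = exp(2πi/q), L = 2^{m−2}−1, and define complex sequences a, b of length 2^{m−1}+2 by a_k = ω^{g^0(r_{k+L,0},…,r_{k+L,m−1})} and b_k = ω^{g^1(r_{k+L,0},…,r_{k+L,m−1})} for 0 ≤ k < 2^{m−1}+2, where r_{i,j} is the j-th binary digit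 of i. Then (a,b) is a (2^{m−1}+2, 2^{π(m−3)}+1)-CZCP. -/
namespace CZCP

/-- `p`-th binary digit. -/
def bt (p i : ℕ) : ℕ := i / 2 ^ p % 2

lemma bt_lt_two (p i : ℕ) : bt p i < 2 := Nat.mod_lt _ (by norm_num)

lemma bt_testBit (p i : ℕ) : bt p i = if i.testBit p then 1 else 0 := by
  have h : i.testBit p = decide (i / 2 ^ p % 2 = 1) := Nat.testBit_eq_decide_div_mod_eq
  have h2 := bt_lt_two p i
  by_cases hb : i.testBit p
  · rw [hb] at h; simp only [hb, if_true]
    have := of_decide_eq_true h.symm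
    simpa [bt] using this
  · rw [Bool.not_eq_true] at hb
    rw [hb] at h; simp only [hb]
    have := of_decide_eq_false h.symm
    unfold bt at h2 ⊢
    simp only [Bool.false_eq_true, if_false]
    omega

lemma eq_of_bt_eq {n i j : ℕ} (hi : i < 2 ^ n) (hj : j < 2 ^ n)
    (h : ∀ p < n, bt p i = bt p j) : i = j := by
  apply Nat.eq_of_testBit_eq
  intro p
  by_cases hp : p < n
  · have := h p hp
    rw [bt_testBit, bt_testBit] at this
    by_cases h1 : i.testBit p <;> by_cases h2 : j.testBit p <;>
      simp_all
  · have h1 : i.testBit p = false :=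
      Nat.testBit_lt_two_pow (lt_of_lt_of_le hi (Nat.pow_le_pow_right (by norm_num) (by omega)))
    have h2 : j.testBit p = false :=
      Nat.testBit_lt_two_pow (lt_of_lt_of_le hj (Nat.pow_le_pow_right (by norm_num) (by omega)))
    rw [h1, h2]

/-- Bits below `n` are unchanged by adding a multiple of `2^n`. -/
lemma bt_add_mul {p n : ℕ} (hp : p < n) (x t : ℕ) : bt p (x + 2 ^ n * t) = bt p x := by
  have h1 : 2 ^ n = 2 ^ p * 2 ^ (n - p) := by
    rw [← pow_add]; congr 1; omega
  have h2 : (x + 2 ^ n * t) / 2 ^ p = x / 2 ^ p + 2 ^ (n - p) * t := by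
    rw [h1, mul_assoc, Nat.add_mul_div_left _ _ (Nat.two_pow_pos p)]
  unfold bt
  rw [h2]
  have h3 : 2 ^ (n - p) = 2 * 2 ^ (n - p - 1) := by
    rw [← pow_succ']; congr 1; omega
  obtain ⟨w, hw⟩ : ∃ w, 2 ^ (n - p) * t = 2 * w := ⟨2 ^ (n - p - 1) * t, by rw [h3]; ring⟩
  rw [hw]; omega

/-- Complement: bits of `2^n - 1 - i`. -/
lemma bt_compl {p n i : ℕ} (hp : p < n) (hi : i < 2 ^ n) :
    bt p (2 ^ n - 1 - i) = 1 - bt p i := by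
  have he : 2 ^ n - 1 - i = 2 ^ n - (i + 1) := by omega
  have h := Nat.testBit_two_pow_sub_succ hi p
  rw [he, bt_testBit, bt_testBit, h]
  by_cases hb : i.testBit p <;> simp [hb, hp]
lemma decomp_of_bt_zero {p x : ℕ} (h : bt p x = 0) :
    ∃ s, x = 2 ^ (p + 1) * (x / 2 ^ (p + 1)) + s ∧ s < 2 ^ p := by
  refine ⟨x % 2 ^ (p + 1), (Nat.div_add_mod x (2 ^ (p + 1))).symm, ?_⟩
  have h1 : x % 2 ^ (p + 1) < 2 ^ (p + 1) := Nat.mod_lt _ (Nat.two_pow_pos _)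
  by_contra hs
  push_neg at hs
  have h2 : x % 2 ^ (p + 1) / 2 ^ p = 1 := by
    apply Nat.div_eq_of_lt_le (by omega)
    rw [pow_succ] at h1; omega
  have h3 : bt p (x % 2 ^ (p + 1)) = 1 := by unfold bt; rw [h2]
  have h4 : bt p (x % 2 ^ (p + 1)) = bt p x := by
    rw [bt_testBit, bt_testBit, Nat.testBit_mod_two_pow]
    simp [Nat.lt_succ_self]
  omega

/-- Bit `r` after adding `2^p` to a number whose `p`-th bit is `0`. -/
lemma bt_add_pow {p x : ℕ} (h : bt p x = 0) (r : ℕ) :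
    bt r (x + 2 ^ p) = if r = p then 1 else bt r x := by
  rcases lt_trichotomy r p with hr | rfl | hr
  · simp only [if_neg (by omega : ¬ r = p)]
    have h1 : 2 ^ p = 2 ^ r * 2 ^ (p - r) := by rw [← pow_add]; congr 1; omega
    unfold bt
    rw [h1, Nat.add_mul_div_left _ _ (Nat.two_pow_pos r)]
    obtain ⟨w, hw⟩ : ∃ w, 2 ^ (p - r) = 2 * w := ⟨2 ^ (p - r - 1), by rw [← pow_succ']; congr 1; omega⟩
    rw [hw]; omega
  · rw [if_pos rfl]
    unfold bt at h ⊢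
    rw [Nat.add_div_right _ (Nat.two_pow_pos r)]
    omega
  · simp only [if_neg (by omega : ¬ r = p)]
    obtain ⟨s, hx, hs⟩ := decomp_of_bt_zero h
    set q := x / 2 ^ (p + 1) with hq
    have hrr : 2 ^ r = 2 ^ (p + 1) * 2 ^ (r - (p + 1)) := by rw [← pow_add]; congr 1; omega
    have key : ∀ y, y < 2 ^ (p + 1) → (2 ^ (p + 1) * q + y) / 2 ^ r = q / 2 ^ (r - (p + 1)) := by
      intro y hy
      rw [hrr, ← Nat.div_div_eq_div_mul, Nat.mul_add_div (Nat.two_pow_pos _),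
        Nat.div_eq_of_lt hy, add_zero]
    unfold bt
    have e1 : x + 2 ^ p = 2 ^ (p + 1) * q + (s + 2 ^ p) := by omega
    rw [e1, key _ (by rw [pow_succ]; omega), hx, key _ (by rw [pow_succ]; omega)]

lemma lt_of_bt_zero {p n x : ℕ} (h : bt p x = 0) (hx : x < 2 ^ n) (hp : p < n) :
    x + 2 ^ p < 2 ^ n := by
  obtain ⟨s, hx', hs⟩ := decomp_of_bt_zero h
  set q := x / 2 ^ (p + 1) with hq
  have h1 : 2 ^ n = 2 ^ (p + 1) * 2 ^ (n - (p + 1)) := by rw [← pow_add]; congr 1; omega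
  have h2 : q < 2 ^ (n - (p + 1)) := by
    by_contra hc
    push_neg at hc
    have : 2 ^ (p + 1) * 2 ^ (n - (p + 1)) ≤ 2 ^ (p + 1) * q := Nat.mul_le_mul_left _ hc
    omega
  have h3 : q + 1 ≤ 2 ^ (n - (p + 1)) := h2
  have h4 : 2 ^ (p + 1) * (q + 1) ≤ 2 ^ (p + 1) * 2 ^ (n - (p + 1)) := Nat.mul_le_mul_left _ h3
  have h5 : 2 ^ (p + 1) * (q + 1) = 2 ^ (p + 1) * q + 2 ^ (p + 1) := by ring
  have h6 : 2 ^ (p + 1) = 2 * 2 ^ p := by rw [pow_succ]; ring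
  omega

/-- Flip bit `p`. -/
def flip (p x : ℕ) : ℕ := if bt p x = 0 then x + 2 ^ p else x - 2 ^ p

lemma two_pow_le_of_bt_one {p x : ℕ} (h : bt p x = 1) : 2 ^ p ≤ x := by
  have h' : x / 2 ^ p % 2 = 1 := h
  have : 1 ≤ x / 2 ^ p := by
    generalize x / 2 ^ p = d at h'
    omega
  calc 2 ^ p = 2 ^ p * 1 := by ring
    _ ≤ 2 ^ p * (x / 2 ^ p) := Nat.mul_le_mul_left _ this
    _ ≤ x := Nat.mul_div_le x (2 ^ p)

lemma bt_sub_zero {p x : ℕ} (h : bt p x = 1) : bt p (x - 2 ^ p) = 0 := by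
  have hle := two_pow_le_of_bt_one h
  have h1 : (x - 2 ^ p) + 2 ^ p = x := by omega
  have h2 : x / 2 ^ p = (x - 2 ^ p) / 2 ^ p + 1 := by
    conv_lhs => rw [← h1]
    rw [Nat.add_div_right _ (Nat.two_pow_pos _)]
  unfold bt at h ⊢
  omega

lemma bt_flip {p x : ℕ} (r : ℕ) :
    bt r (flip p x) = if r = p then 1 - bt p x else bt r x := by
  unfold flip
  have h2 := bt_lt_two p x
  by_cases h : bt p x = 0
  · rw [if_pos h, bt_add_pow h r]
    by_cases hr : r = p <;> simp [hr, h]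
  · have h1 : bt p x = 1 := by omega
    rw [if_neg h]
    have h0 := bt_sub_zero h1
    have h3 := bt_add_pow h0 r
    have h4 : (x - 2 ^ p) + 2 ^ p = x := by have := two_pow_le_of_bt_one h1; omega
    rw [h4] at h3
    by_cases hr : r = p
    · subst hr; simp [h0, h1]
    · rw [if_neg hr] at h3 ⊢; omega

lemma flip_lt {p n x : ℕ} (hx : x < 2 ^ n) (hp : p < n) : flip p x < 2 ^ n := by
  unfold flip
  by_cases h : bt p x = 0
  · rw [if_pos h]; exact lt_of_bt_zero h hx hp
  · rw [if_neg h]; exact Nat.lt_of_le_of_lt (Nat.sub_le x _) hx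

lemma flip_flip (p x : ℕ) : flip p (flip p x) = x := by
  have h1 := bt_flip (p := p) (x := x) p
  rw [if_pos rfl] at h1
  have h2 := bt_lt_two p x
  unfold flip at h1 ⊢
  by_cases h : bt p x = 0
  · rw [if_pos h] at h1 ⊢
    rw [h] at h1
    rw [if_neg (by omega)]
    omega
  · rw [if_neg h] at h1 ⊢
    have hx1 : bt p x = 1 := by omega
    rw [hx1] at h1
    rw [if_pos (by omega)]
    have := two_pow_le_of_bt_one hx1
    omega

lemma flip_add {p x t : ℕ} (h : bt p x = bt p (x + t)) :
    flip p (x + t) = flip p x + t := by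
  unfold flip
  by_cases h0 : bt p x = 0
  · rw [if_pos h0, if_pos (h ▸ h0)]; ring
  · have h1 : bt p x = 1 := by have := bt_lt_two p x; omega
    rw [if_neg h0, if_neg (by omega)]
    have := two_pow_le_of_bt_one h1
    omega

/-- Character of `ZMod 2`. -/
noncomputable def chi (x : ZMod 2) : ℂ := if x = 0 then 1 else -1

lemma zmod2_cases (x : ZMod 2) : x = 0 ∨ x = 1 := by revert x; decide

lemma chi_zero : chi 0 = 1 := by simp [chi]

lemma chi_one : chi 1 = -1 := by norm_num [chi]

lemma chi_add (x y : ZMod 2) : chi (x + y) = chi x * chi y := by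
  rcases zmod2_cases x with rfl | rfl <;> rcases zmod2_cases y with rfl | rfl <;>
    norm_num [chi] <;> rfl

lemma chi_sq (x : ZMod 2) : chi x * chi x = 1 := by
  rcases zmod2_cases x with rfl | rfl <;> norm_num [chi]

lemma chi_of_add_one {x y : ZMod 2} (h : x + y = 1) : chi x = - chi y := by
  rcases zmod2_cases x with rfl | rfl <;> rcases zmod2_cases y with rfl | rfl
  · exact absurd h (by decide)
  · rw [chi_zero, chi_one]; norm_num
  · rw [chi_one, chi_zero]
  · exact absurd h (by decide)

lemma chi_natCast (t : ℕ) : (-1 : ℂ) ^ t = chi (t : ZMod 2) := by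
  have h : ((t : ZMod 2)) = ((t % 2 : ℕ) : ZMod 2) := (ZMod.natCast_mod t 2).symm
  rcases Nat.even_or_odd t with he | ho
  · have h2 : t % 2 = 0 := Nat.even_iff.mp he
    rw [he.neg_one_pow, h, h2, Nat.cast_zero, chi_zero]
  · have h2 : t % 2 = 1 := Nat.odd_iff.mp ho
    rw [ho.neg_one_pow, h, h2, Nat.cast_one, chi_one]

lemma neg_one_pow_mod (x : ℕ) : (-1 : ℂ) ^ (x % 2) = (-1 : ℂ) ^ x := by
  rw [chi_natCast, chi_natCast, ZMod.natCast_mod]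

/-- `p`-th bit as an element of `ZMod 2`. -/
def bz (p i : ℕ) : ZMod 2 := (bt p i : ZMod 2)

lemma bz_eq_of {p x y : ℕ} (h : bt p x = bt p y) : bz p x = bz p y := by
  unfold bz; rw [h]

lemma bz_add_self {p x y : ℕ} (h : bt p x = bt p y) : bz p x + bz p y = 0 := by
  rw [bz_eq_of h]
  exact CharTwo.add_self_eq_zero _

lemma bz_add_one_of_ne {p x y : ℕ} (h : bt p x ≠ bt p y) : bz p x + bz p y = 1 := by
  have hx := bt_lt_two p x
  have hy := bt_lt_two p y
  unfold bz
  interval_cases hbx : bt p x <;> interval_cases hby : bt p y <;> simp_all <;> decide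

lemma bz_flip_self (p x : ℕ) : bz p (flip p x) = bz p x + 1 := by
  have h := bt_flip (p := p) (x := x) p
  rw [if_pos rfl] at h
  have h2 := bt_lt_two p x
  unfold bz
  rw [h]
  interval_cases hbx : bt p x <;> simp <;> decide

lemma bz_flip_ne {p r : ℕ} (h : r ≠ p) (x : ℕ) : bz r (flip p x) = bz r x := by
  unfold bz
  rw [bt_flip r, if_neg h]

/-- The quadratic form (path graph). -/
def Qz (σ : ℕ → ℕ) (n i : ℕ) : ZMod 2 :=
  ∑ α ∈ Finset.range (n - 1), bz (σ α) i * bz (σ (α + 1)) i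

lemma Qz_flip {n : ℕ} {σ : ℕ → ℕ} (hσ : Set.BijOn σ (Set.Iio n) (Set.Iio n))
    {β : ℕ} (hβ1 : 1 ≤ β) (hβn : β ≤ n - 1) (hn : 1 ≤ n) (x : ℕ) :
    Qz σ n (flip (σ β) x) + Qz σ n x
      = bz (σ (β - 1)) x + (if β < n - 1 then bz (σ (β + 1)) x else 0) := by
  have hn2 : 2 ≤ n := by omega
  have hinj := hσ.2.1
  have hne_val : ∀ i j : ℕ, i < n → j < n → i ≠ j → σ i ≠ σ j := by
    intro i j hi hj hij hc
    exact hij (hinj hi hj hc)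
  unfold Qz
  rw [← Finset.sum_add_distrib]
  have key : ∀ α ∈ Finset.range (n - 1),
      bz (σ α) (flip (σ β) x) * bz (σ (α + 1)) (flip (σ β) x) + bz (σ α) x * bz (σ (α + 1)) x
        = (if α = β - 1 then bz (σ (β - 1)) x else 0)
          + (if α = β then bz (σ (β + 1)) x else 0) := by
    intro α hα
    rw [Finset.mem_range] at hα
    have hαn : α < n := by omega
    have hα1n : α + 1 < n := by omega
    have hβln : β < n := by omega
    by_cases hc1 : α = β - 1
    · have hc2 : ¬ (α = β) := by omega
      have he1 : α + 1 = β := by omega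
      rw [if_pos hc1, if_neg hc2]
      rw [he1, bz_flip_self]
      rw [bz_flip_ne (hne_val _ _ hαn hβln (by omega)) x]
      subst hc1
      rcases zmod2_cases (bz (σ (β - 1)) x) with h1 | h1 <;>
        rcases zmod2_cases (bz (σ β) x) with h2 | h2 <;> rw [h1, h2] <;> ring_nf <;> decide
    · by_cases hc2 : α = β
      · rw [if_neg hc1, if_pos hc2]
        subst hc2
        rw [bz_flip_self]
        rw [bz_flip_ne (hne_val _ _ hα1n hβln (by omega)) x]
        rcases zmod2_cases (bz (σ α) x) with h1 | h1 <;>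
          rcases zmod2_cases (bz (σ (α + 1)) x) with h2 | h2 <;> rw [h1, h2] <;> ring_nf <;> decide
      · rw [if_neg hc1, if_neg hc2]
        rw [bz_flip_ne (hne_val _ _ hαn hβln hc2) x,
          bz_flip_ne (hne_val _ _ hα1n hβln (by omega)) x]
        rw [add_zero]
        exact CharTwo.add_self_eq_zero _
  rw [Finset.sum_congr rfl key, Finset.sum_add_distrib,
    Finset.sum_ite_eq' (Finset.range (n - 1)) (β - 1) (fun _ => bz (σ (β - 1)) x),
    Finset.sum_ite_eq' (Finset.range (n - 1)) β (fun _ => bz (σ (β + 1)) x)]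
  rw [if_pos (Finset.mem_range.mpr (by omega))]
  congr 1
  simp [Finset.mem_range]

lemma golay {n : ℕ} (hn : 1 ≤ n) {σ : ℕ → ℕ} (hσ : Set.BijOn σ (Set.Iio n) (Set.Iio n))
    {τ : ℕ} (hτ : 1 ≤ τ) :
    ∑ j ∈ Finset.range (2 ^ n - τ),
      (chi (Qz σ n j) * chi (Qz σ n (j + τ))
        + chi (Qz σ n j + bz (σ (n - 1)) j)
          * chi (Qz σ n (j + τ) + bz (σ (n - 1)) (j + τ))) = 0 := by
  classical
  set D : ℕ → Finset ℕ :=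
    fun j => (Finset.range n).filter (fun α => bt (σ α) j ≠ bt (σ α) (j + τ)) with hD
  set a0 : ℕ → ℕ := fun j => (D j).sup id with ha0
  set P : ℕ → ℕ := fun j => σ (a0 j + 1) with hP
  set G : ℕ → ℕ :=
    fun j => if bt (σ (n - 1)) j = bt (σ (n - 1)) (j + τ) then flip (P j) j else j with hGdef
  set f : ℕ → ℂ :=
    fun j => chi (Qz σ n j) * chi (Qz σ n (j + τ))
      + chi (Qz σ n j + bz (σ (n - 1)) j) * chi (Qz σ n (j + τ) + bz (σ (n - 1)) (j + τ))
    with hf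
  show ∑ j ∈ Finset.range (2 ^ n - τ), f j = 0
  -- factored form of f
  have hfact : ∀ i, f i = chi (Qz σ n i + Qz σ n (i + τ))
      * (1 + chi (bz (σ (n - 1)) i + bz (σ (n - 1)) (i + τ))) := by
    intro i
    rw [hf]
    simp only
    rw [chi_add, chi_add, chi_add, chi_add]
    ring
  -- facts about D, a0, P in the equal-top-bit case
  have hcore : ∀ j, j < 2 ^ n - τ → bt (σ (n - 1)) j = bt (σ (n - 1)) (j + τ) →
      a0 j + 1 ≤ n - 1 ∧ P j < n ∧ bt (P j) j = bt (P j) (j + τ) ∧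
        bt (σ (a0 j)) j ≠ bt (σ (a0 j)) (j + τ) := by
    intro j hj htq
    have hj1 : j < 2 ^ n := by
      have : τ ≤ 2 ^ n := by omega
      omega
    have hj2 : j + τ < 2 ^ n := by omega
    -- D j is nonempty
    have hDne : (D j).Nonempty := by
      by_contra hemp
      rw [Finset.not_nonempty_iff_eq_empty] at hemp
      have heq : j = j + τ := by
        apply eq_of_bt_eq hj1 hj2
        intro r hr
        by_contra hbr
        obtain ⟨α, hα, hαr⟩ := hσ.2.2 (show r ∈ Set.Iio n from hr)
        have hmem : α ∈ D j := by
          rw [hD]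
          simp only [Finset.mem_filter, Finset.mem_range]
          exact ⟨hα, by rw [hαr]; exact hbr⟩
        rw [hemp] at hmem
        exact absurd hmem (Finset.notMem_empty α)
      omega
    obtain ⟨b, hbmem, hbe⟩ := Finset.exists_mem_eq_sup (D j) hDne id
    have ha0mem : a0 j ∈ D j := by rw [ha0]; simp only; rw [hbe]; exact hbmem
    have ha0r : a0 j ∈ Finset.range n := (Finset.mem_filter.mp ha0mem).1
    have ha0ne : bt (σ (a0 j)) j ≠ bt (σ (a0 j)) (j + τ) := by
      have := (Finset.mem_filter.mp ha0mem).2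
      simpa using this
    have hn1notin : a0 j ≠ n - 1 := by
      intro hcon
      apply ha0ne
      rw [hcon]
      exact htq
    have ha0lt : a0 j + 1 ≤ n - 1 := by
      rw [Finset.mem_range] at ha0r
      omega
    have hPlt : P j < n := by
      rw [hP]
      have : a0 j + 1 ∈ Set.Iio n := by simp; omega
      exact hσ.1 this
    have hnotmem : a0 j + 1 ∉ D j := by
      intro hcon
      have hle := Finset.le_sup (f := id) hcon
      simp only [id] at hle
      have hre : a0 j = (D j).sup id := rfl
      omega
    have hPeq : bt (P j) j = bt (P j) (j + τ) := by
      by_contra hc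
      apply hnotmem
      rw [hD]
      simp only [Finset.mem_filter, Finset.mem_range]
      exact ⟨by omega, hc⟩
    exact ⟨ha0lt, hPlt, hPeq, ha0ne⟩
  -- bits of G j
  have hGbit : ∀ j, j < 2 ^ n - τ → bt (σ (n - 1)) j = bt (σ (n - 1)) (j + τ) →
      (G j + τ = flip (P j) (j + τ)) ∧
      (∀ r, bt r (G j) = if r = P j then 1 - bt (P j) j else bt r j) ∧
      (∀ r, bt r (G j + τ) = if r = P j then 1 - bt (P j) (j + τ) else bt r (j + τ)) := by
    intro j hj htq
    obtain ⟨ha0lt, hPlt, hPeq, ha0ne⟩ := hcore j hj htq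
    have hGj : G j = flip (P j) j := by rw [hGdef]; simp only [if_pos htq]
    have hGτ : G j + τ = flip (P j) (j + τ) := by
      rw [hGj, ← flip_add hPeq]
    refine ⟨hGτ, ?_, ?_⟩
    · intro r; rw [hGj]; exact bt_flip r
    · intro r; rw [hGτ]; exact bt_flip r
  -- the key cancellation
  have hkey : ∀ j, j ∈ Finset.range (2 ^ n - τ) → f j + f (G j) = 0 := by
    intro j hjm
    rw [Finset.mem_range] at hjm
    by_cases htq : bt (σ (n - 1)) j = bt (σ (n - 1)) (j + τ)
    · -- equal top bits: G flips, sign changes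
      obtain ⟨ha0lt, hPlt, hPeq, ha0ne⟩ := hcore j hjm htq
      obtain ⟨hGτ, hGb, hGbτ⟩ := hGbit j hjm htq
      have hGj : G j = flip (P j) j := by rw [hGdef]; simp only [if_pos htq]
      -- top bits of G j still equal
      have htq' : bt (σ (n - 1)) (G j) = bt (σ (n - 1)) (G j + τ) := by
        rw [hGb, hGbτ]
        by_cases hc : σ (n - 1) = P j
        · rw [if_pos hc, if_pos hc, hPeq]
        · rw [if_neg hc, if_neg hc, htq]
      -- S (G j) = S j + 1
      have hβ1 : 1 ≤ a0 j + 1 := by omega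
      have e1 := Qz_flip hσ hβ1 ha0lt hn j
      have e2 := Qz_flip hσ hβ1 ha0lt hn (j + τ)
      have e4 : bz (σ (a0 j)) j + bz (σ (a0 j)) (j + τ) = 1 := bz_add_one_of_ne ha0ne
      have e3 : (if a0 j + 1 < n - 1 then bz (σ (a0 j + 1 + 1)) j else 0)
          + (if a0 j + 1 < n - 1 then bz (σ (a0 j + 1 + 1)) (j + τ) else 0) = 0 := by
        by_cases hc : a0 j + 1 < n - 1
        · rw [if_pos hc, if_pos hc]
          apply bz_add_self
          -- a0 j + 2 is not in D j
          have hnotmem : a0 j + 2 ∉ D j := by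
            intro hcon
            have hle := Finset.le_sup (f := id) hcon
            simp only [id] at hle
            have hre : a0 j = (D j).sup id := rfl
            omega
          by_contra hc2
          apply hnotmem
          rw [hD]
          simp only [Finset.mem_filter, Finset.mem_range]
          constructor
          · omega
          · convert hc2 using 3 <;> omega
        · rw [if_neg hc, if_neg hc, add_zero]
      have hsimp : a0 j + 1 - 1 = a0 j := by omega
      rw [hsimp] at e1 e2
      have hsum : (Qz σ n (G j) + Qz σ n (G j + τ)) + (Qz σ n j + Qz σ n (j + τ)) = 1 := by
        rw [hGτ, hGj]
        have hPj : P j = σ (a0 j + 1) := rfl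
        rw [hPj]
        linear_combination e1 + e2 + e3 + e4
      -- chi of sums
      have hchi : chi (Qz σ n (G j) + Qz σ n (G j + τ)) = - chi (Qz σ n j + Qz σ n (j + τ)) :=
        chi_of_add_one hsum
      rw [hfact, hfact]
      rw [bz_add_self htq, bz_add_self htq', hchi, chi_zero]
      ring
    · -- unequal top bits: both terms vanish
      have hG : G j = j := by rw [hGdef]; simp only [if_neg htq]
      rw [hG, hfact]
      rw [bz_add_one_of_ne htq, chi_one]
      ring
  -- apply the involution principle
  apply Finset.sum_involution (fun j _ => G j) (fun j hj => hkey j hj)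
  · -- f j ≠ 0 → G j ≠ j
    intro j hj hfne heq
    have h1 := hkey j hj
    rw [heq] at h1
    have : f j = 0 := by linear_combination h1 / 2
    exact hfne this
  · -- G j ∈ range
    intro j hj
    rw [Finset.mem_range] at hj ⊢
    by_cases htq : bt (σ (n - 1)) j = bt (σ (n - 1)) (j + τ)
    · obtain ⟨ha0lt, hPlt, hPeq, ha0ne⟩ := hcore j hj htq
      obtain ⟨hGτ, hGb, hGbτ⟩ := hGbit j hj htq
      have : G j + τ < 2 ^ n := by
        rw [hGτ]
        exact flip_lt (by omega) hPlt
      omega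
    · rw [hGdef]; simp only [if_neg htq]; exact hj
  · -- involution
    intro j hjm
    rw [Finset.mem_range] at hjm
    by_cases htq : bt (σ (n - 1)) j = bt (σ (n - 1)) (j + τ)
    · obtain ⟨ha0lt, hPlt, hPeq, ha0ne⟩ := hcore j hjm htq
      obtain ⟨hGτ, hGb, hGbτ⟩ := hGbit j hjm htq
      have hGj : G j = flip (P j) j := by rw [hGdef]; simp only [if_pos htq]
      have htq' : bt (σ (n - 1)) (G j) = bt (σ (n - 1)) (G j + τ) := by
        rw [hGb, hGbτ]
        by_cases hc : σ (n - 1) = P j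
        · rw [if_pos hc, if_pos hc, hPeq]
        · rw [if_neg hc, if_neg hc, htq]
      -- D (G j) = D j
      have hDeq : D (G j) = D j := by
        rw [hD]
        ext α
        simp only [Finset.mem_filter, Finset.mem_range]
        constructor
        · rintro ⟨hαn, hne⟩
          refine ⟨hαn, ?_⟩
          rw [hGb, hGbτ] at hne
          by_cases hc : σ α = P j
          · rw [if_pos hc, if_pos hc] at hne
            have h1 := bt_lt_two (P j) j
            have h2 := bt_lt_two (P j) (j + τ)
            rw [hc]
            omega
          · rwa [if_neg hc, if_neg hc] at hne
        · rintro ⟨hαn, hne⟩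
          refine ⟨hαn, ?_⟩
          rw [hGb, hGbτ]
          by_cases hc : σ α = P j
          · rw [if_pos hc, if_pos hc]
            have h1 := bt_lt_two (P j) j
            have h2 := bt_lt_two (P j) (j + τ)
            rw [hc] at hne
            omega
          · rw [if_neg hc, if_neg hc]; exact hne
      have hPeq' : P (G j) = P j := by
        rw [hP]
        simp only
        rw [ha0]
        simp only
        rw [hDeq]
      have hGG : G (G j) = flip (P j) (G j) := by
        show (if bt (σ (n - 1)) (G j) = bt (σ (n - 1)) (G j + τ) then flip (P (G j)) (G j) else G j) = flip (P j) (G j)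
        simp only [if_pos htq']
        rw [hPeq']
      rw [hGG, hGj, flip_flip]
    · have hG : G j = j := by rw [hGdef]; simp only [if_neg htq]
      rw [hG, hG]

end CZCP

/-- Aperiodic cross-correlation at shift `τ` of two length-`L` complex sequences
(indexed `0, …, L-1`); it vanishes for `τ ≥ L`. -/
noncomputable def rhoC (L : ℕ) (u v : ℕ → ℂ) (τ : ℕ) : ℂ :=
  ∑ k ∈ Finset.range (L - τ), u k * (starRingEnd ℂ) (v (k + τ))

/-- `(u, v)` (length-`L` complex sequences) is an `(L, Z)`-CZCP:
(C1) the autocorrelation sums vanish for `τ ∈ {1,…,Z} ∪ {L-Z,…,L-1}`, and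
(C2) the cross-correlation sums vanish for `τ ∈ {L-Z,…,L-1}`. -/
noncomputable def IsCZCP (L Z : ℕ) (u v : ℕ → ℂ) : Prop :=
  (∀ τ : ℕ, ((1 ≤ τ ∧ τ ≤ Z) ∨ (L - Z ≤ τ ∧ τ ≤ L - 1)) →
    rhoC L u u τ + rhoC L v v τ = 0) ∧
  (∀ τ : ℕ, (L - Z ≤ τ ∧ τ ≤ L - 1) → rhoC L u v τ + rhoC L v u τ = 0)

/-- Theorem 1 of the paper: construction of
`(2^(m-1) + 2, 2^(σ(m-3)) + 1)`-CZCPs from generalized Boolean functions.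
Here `q ≥ 2` is even, `σ` is a permutation of `{0, …, m-3}`, `c ∈ ℤ_q`,
`bit j i = i / 2^j % 2` is the `j`-th binary digit of `i`, the mod-2 valued functions
`ζ^d, η^d` and the mod-`q` valued generalized Boolean function `g^d` are as in the paper,
`ω = exp(2πi/q)`, and `a, b` are the truncations (removing the first and last
`L = 2^(m-2) - 1` entries) of the length-`2^m` sequences `(ω^{g^0(i)})_i, (ω^{g^1(i)})_i`. -/
theorem stmt_3 (q m : ℕ) (hq : 2 ≤ q) (hq2 : 2 ∣ q) (hm : 4 ≤ m)
    (σ : ℕ → ℕ) (hσ : Set.BijOn σ (Set.Iio (m - 2)) (Set.Iio (m - 2)))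
    (c : ℕ) (hc : c < q)
    (bit : ℕ → ℕ → ℕ) (hbit : ∀ j i, bit j i = i / 2 ^ j % 2)
    (ζ η : ℕ → ℕ → ℕ)
    (hζ : ∀ d i, ζ d i =
      ((∑ α ∈ Finset.range (m - 3), bit (σ α) i * bit (σ (α + 1)) i)
        + d * bit (σ (m - 3)) i) % 2)
    (hη : ∀ d i, η d i =
      ((∑ α ∈ Finset.range (m - 3), (1 - bit (σ α) i) * (1 - bit (σ (α + 1)) i))
        + (1 - d) * (1 - bit (σ (m - 3)) i) + d) % 2)
    (g : ℕ → ℕ → ℕ)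
    (hg : ∀ d i, g d i =
      ((q / 2) * ((1 - bit (m - 1) i) * bit (m - 2) i * ζ d i
        + bit (m - 1) i * (1 - bit (m - 2) i) * η d i
        + (1 - d) * bit (m - 1) i * bit (m - 2) i) + c) % q)
    (ω : ℂ) (hω : ω = Complex.exp (2 * (Real.pi : ℂ) * Complex.I / (q : ℂ)))
    (a b : ℕ → ℂ)
    (ha : ∀ k, a k = ω ^ g 0 (k + (2 ^ (m - 2) - 1)))
    (hb : ∀ k, b k = ω ^ g 1 (k + (2 ^ (m - 2) - 1))) :
    IsCZCP (2 ^ (m - 1) + 2) (2 ^ (σ (m - 3)) + 1) a b := by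
  classical
  set N := 2 ^ (m - 2) with hNdef
  have hn2 : 2 ≤ m - 2 := by omega
  have hN4 : 4 ≤ N := by
    rw [hNdef]
    calc (4 : ℕ) = 2 ^ 2 := by norm_num
      _ ≤ 2 ^ (m - 2) := Nat.pow_le_pow_right (by norm_num) hn2
  have hL : 2 ^ (m - 1) = 2 * N := by
    rw [hNdef, ← pow_succ']
    congr 1
    omega
  have htop : σ (m - 3) < m - 2 := hσ.1 (by simp only [Set.mem_Iio]; omega)
  have hZhalf : 2 ^ (σ (m - 3)) * 2 ≤ N := by
    have h1 : 2 ^ (σ (m - 3)) ≤ 2 ^ (m - 3) := Nat.pow_le_pow_right (by norm_num) (by omega)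
    have h2 : 2 ^ (m - 3) * 2 = N := by
      rw [hNdef, ← pow_succ]
      congr 1
      omega
    omega
  have hZ1 : 1 ≤ 2 ^ (σ (m - 3)) := Nat.one_le_two_pow
  -- ω facts
  have hq0 : (q : ℂ) ≠ 0 := Nat.cast_ne_zero.mpr (by omega)
  have hωq : ω ^ q = 1 := by
    rw [hω, ← Complex.exp_nat_mul]
    rw [show (q : ℂ) * (2 * (Real.pi : ℂ) * Complex.I / (q : ℂ))
        = 2 * (Real.pi : ℂ) * Complex.I by field_simp]
    exact Complex.exp_two_pi_mul_I
  have hωh : ω ^ (q / 2) = -1 := by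
    obtain ⟨t, rfl⟩ := hq2
    have ht0 : (t : ℂ) ≠ 0 := by
      rw [Nat.cast_ne_zero]
      omega
    rw [hω, ← Complex.exp_nat_mul, Nat.mul_div_cancel_left t (by norm_num)]
    rw [show (t : ℂ) * (2 * (Real.pi : ℂ) * Complex.I / ((2 * t : ℕ) : ℂ))
        = (Real.pi : ℂ) * Complex.I by push_cast; field_simp]
    exact Complex.exp_pi_mul_I
  have hωc : ω * (starRingEnd ℂ) ω = 1 := by
    have hconjz : (starRingEnd ℂ) (2 * (Real.pi : ℂ) * Complex.I / (q : ℂ))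
        = -(2 * (Real.pi : ℂ) * Complex.I / (q : ℂ)) := by
      rw [map_div₀, map_mul, map_mul, Complex.conj_I]
      simp only [Complex.conj_ofReal, map_ofNat, map_natCast]
      ring
    rw [hω, ← Complex.exp_conj, hconjz, ← Complex.exp_add]
    simp
  have hK : ω ^ c * (starRingEnd ℂ) (ω ^ c) = 1 := by
    rw [map_pow, ← mul_pow, hωc, one_pow]
  have hpowmod : ∀ x : ℕ, ω ^ (x % q) = ω ^ x := by
    intro x
    conv_rhs => rw [← Nat.div_add_mod x q]
    rw [pow_add, pow_mul, hωq, one_pow, one_mul]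
  have hval : ∀ d i, ω ^ g d i = (-1 : ℂ) ^ ((1 - bit (m - 1) i) * bit (m - 2) i * ζ d i
        + bit (m - 1) i * (1 - bit (m - 2) i) * η d i
        + (1 - d) * bit (m - 1) i * bit (m - 2) i) * ω ^ c := by
    intro d i
    rw [hg, hpowmod, pow_add, pow_mul, hωh]
  -- region bit values
  have hreg0 : ∀ i, i < N → bit (m - 2) i = 0 ∧ bit (m - 1) i = 0 := by
    intro i hi
    constructor
    · have hd : i / N = 0 := Nat.div_eq_of_lt hi
      rw [hbit, ← hNdef, hd]
    · have hd : i / 2 ^ (m - 1) = 0 := Nat.div_eq_of_lt (by omega)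
      rw [hbit, hd]
  have hreg1 : ∀ i, N ≤ i → i < 2 * N → bit (m - 2) i = 1 ∧ bit (m - 1) i = 0 := by
    intro i h1 h2
    constructor
    · have hd : i / N = 1 := by
        apply Nat.div_eq_of_lt_le <;> omega
      rw [hbit, ← hNdef, hd]
    · have hd : i / 2 ^ (m - 1) = 0 := Nat.div_eq_of_lt (by omega)
      rw [hbit, hd]
  have hreg2 : ∀ i, 2 * N ≤ i → i < 3 * N → bit (m - 2) i = 0 ∧ bit (m - 1) i = 1 := by
    intro i h1 h2
    constructor
    · have hd : i / N = 2 := by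
        apply Nat.div_eq_of_lt_le <;> omega
      rw [hbit, ← hNdef, hd]
    · have hd : i / (2 * N) = 1 := by
        apply Nat.div_eq_of_lt_le <;> omega
      rw [hbit, hL, hd]
  have hreg3 : bit (m - 2) (3 * N) = 1 ∧ bit (m - 1) (3 * N) = 1 := by
    constructor
    · have hd : 3 * N / N = 3 := by
        apply Nat.div_eq_of_lt_le <;> omega
      rw [hbit, ← hNdef, hd]
    · have hd : 3 * N / (2 * N) = 1 := by
        apply Nat.div_eq_of_lt_le <;> omega
      rw [hbit, hL, hd]
  -- shift invariance of ζ, η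
  have hσlt : ∀ α, α ≤ m - 3 → σ α < m - 2 := by
    intro α hα
    exact hσ.1 (by simp only [Set.mem_Iio]; omega)
  have hbshift : ∀ p x t, p < m - 2 → bit p (x + N * t) = bit p x := by
    intro p x t hp
    rw [hbit, hbit, hNdef]
    exact CZCP.bt_add_mul hp x t
  have hζshift : ∀ d x t, ζ d (x + N * t) = ζ d x := by
    intro d x t
    rw [hζ, hζ]
    congr 2
    · apply Finset.sum_congr rfl
      intro α hα
      rw [Finset.mem_range] at hα
      rw [hbshift _ _ _ (hσlt α (by omega)), hbshift _ _ _ (hσlt (α + 1) (by omega))]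
    · rw [hbshift _ _ _ (hσlt (m - 3) le_rfl)]
  have hηshift : ∀ d x t, η d (x + N * t) = η d x := by
    intro d x t
    rw [hη, hη]
    congr 3
    · apply Finset.sum_congr rfl
      intro α hα
      rw [Finset.mem_range] at hα
      rw [hbshift _ _ _ (hσlt α (by omega)), hbshift _ _ _ (hσlt (α + 1) (by omega))]
    · rw [hbshift _ _ _ (hσlt (m - 3) le_rfl)]
  -- complement
  have hcompl : ∀ p j, p < m - 2 → j < N → bit p (N - 1 - j) = 1 - bit p j := by
    intro p j hp hj
    rw [hbit, hbit, hNdef]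
    exact CZCP.bt_compl hp (by rw [← hNdef]; exact hj)
  -- the two key sequences
  set A : ℕ → ℂ := fun j => (-1 : ℂ) ^ ζ 0 j with hAdef
  set C : ℕ → ℂ := fun j => (-1 : ℂ) ^ ζ 1 j with hCdef
  have hEta : ∀ j, j < N → ((-1 : ℂ) ^ η 0 j = C (N - 1 - j))
      ∧ ((-1 : ℂ) ^ η 1 j = - A (N - 1 - j)) := by
    intro j hj
    have hS : (∑ α ∈ Finset.range (m - 3), bit (σ α) (N - 1 - j) * bit (σ (α + 1)) (N - 1 - j))
        = ∑ α ∈ Finset.range (m - 3), (1 - bit (σ α) j) * (1 - bit (σ (α + 1)) j) := by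
      apply Finset.sum_congr rfl
      intro α hα
      rw [Finset.mem_range] at hα
      rw [hcompl _ _ (hσlt α (by omega)) hj, hcompl _ _ (hσlt (α + 1) (by omega)) hj]
    have htc := hcompl _ _ (hσlt (m - 3) le_rfl) hj
    constructor
    · rw [hη]
      simp only [hCdef]
      rw [hζ, hS, htc]
      norm_num
    · rw [hη]
      simp only [hAdef]
      rw [hζ, hS, htc]
      rw [CZCP.neg_one_pow_mod, CZCP.neg_one_pow_mod]
      norm_num [pow_add]
  -- evaluation of a, b on the four regions
  have haev0 : a 0 = 1 * ω ^ c := by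
    rw [ha, hval, zero_add]
    rw [(hreg0 (N - 1) (by omega)).1, (hreg0 (N - 1) (by omega)).2]
    norm_num
  have hbev0 : b 0 = 1 * ω ^ c := by
    rw [hb, hval, zero_add]
    rw [(hreg0 (N - 1) (by omega)).1, (hreg0 (N - 1) (by omega)).2]
    norm_num
  have haA : ∀ k, 1 ≤ k → k ≤ N → a k = A (k - 1) * ω ^ c := by
    intro k h1 h2
    rw [ha, hval]
    rw [(hreg1 (k + (N - 1)) (by omega) (by omega)).1,
      (hreg1 (k + (N - 1)) (by omega) (by omega)).2]
    rw [show k + (N - 1) = (k - 1) + N * 1 by omega, hζshift]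
    simp only [hAdef]
    norm_num
  have hbA : ∀ k, 1 ≤ k → k ≤ N → b k = C (k - 1) * ω ^ c := by
    intro k h1 h2
    rw [hb, hval]
    rw [(hreg1 (k + (N - 1)) (by omega) (by omega)).1,
      (hreg1 (k + (N - 1)) (by omega) (by omega)).2]
    rw [show k + (N - 1) = (k - 1) + N * 1 by omega, hζshift]
    simp only [hCdef]
    norm_num
  have haB : ∀ k, N + 1 ≤ k → k ≤ 2 * N → a k = C (2 * N - k) * ω ^ c := by
    intro k h1 h2
    rw [ha, hval]
    rw [(hreg2 (k + (N - 1)) (by omega) (by omega)).1,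
      (hreg2 (k + (N - 1)) (by omega) (by omega)).2]
    rw [show k + (N - 1) = (k - N - 1) + N * 2 by omega, hηshift]
    have hEt := (hEta (k - N - 1) (by omega)).1
    rw [show N - 1 - (k - N - 1) = 2 * N - k by omega] at hEt
    rw [show (1 - 1) * 0 * ζ 0 (k - N - 1 + N * 2) + 1 * (1 - 0) * η 0 (k - N - 1)
        + (1 - 0) * 1 * 0 = η 0 (k - N - 1) by ring]
    rw [hEt]
  have hbB : ∀ k, N + 1 ≤ k → k ≤ 2 * N → b k = (- A (2 * N - k)) * ω ^ c := by
    intro k h1 h2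
    rw [hb, hval]
    rw [(hreg2 (k + (N - 1)) (by omega) (by omega)).1,
      (hreg2 (k + (N - 1)) (by omega) (by omega)).2]
    rw [show k + (N - 1) = (k - N - 1) + N * 2 by omega, hηshift]
    have hEt := (hEta (k - N - 1) (by omega)).2
    rw [show N - 1 - (k - N - 1) = 2 * N - k by omega] at hEt
    rw [show (1 - 1) * 0 * ζ 1 (k - N - 1 + N * 2) + 1 * (1 - 0) * η 1 (k - N - 1)
        + (1 - 1) * 1 * 0 = η 1 (k - N - 1) by ring]
    rw [hEt]
  have haE : a (2 * N + 1) = (-1 : ℂ) * ω ^ c := by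
    rw [ha, hval]
    rw [show 2 * N + 1 + (N - 1) = 3 * N by omega, hreg3.1, hreg3.2]
    norm_num
  have hbE : b (2 * N + 1) = 1 * ω ^ c := by
    rw [hb, hval]
    rw [show 2 * N + 1 + (N - 1) = 3 * N by omega, hreg3.1, hreg3.2]
    norm_num
  -- A and C agree below 2^(σ (m-3))
  have hE : ∀ j, j < 2 ^ (σ (m - 3)) → A j = C j := by
    intro j hj
    simp only [hAdef, hCdef]
    rw [hζ, hζ]
    rw [show bit (σ (m - 3)) j = 0 by rw [hbit, Nat.div_eq_of_lt hj]]
  -- the Golay property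
  have hGolay : ∀ τ, 1 ≤ τ →
      ∑ j ∈ Finset.range (N - τ), (A j * A (j + τ) + C j * C (j + τ)) = 0 := by
    intro τ hτ
    have hg2 := CZCP.golay (n := m - 2) (by omega) hσ hτ
    rw [← hNdef] at hg2
    rw [show m - 2 - 1 = m - 3 from by omega] at hg2
    rw [← hg2]
    apply Finset.sum_congr rfl
    intro j hj
    have hcast : ∀ i : ℕ, ((∑ α ∈ Finset.range (m - 3), bit (σ α) i * bit (σ (α + 1)) i : ℕ)
        : ZMod 2) = CZCP.Qz σ (m - 2) i := by
      intro i
      rw [CZCP.Qz, show m - 2 - 1 = m - 3 from by omega]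
      push_cast
      apply Finset.sum_congr rfl
      intro α _
      rw [hbit, hbit]
      rfl
    have hbz : ∀ i : ℕ, ((bit (σ (m - 3)) i : ℕ) : ZMod 2) = CZCP.bz (σ (m - 3)) i := by
      intro i
      rw [hbit]
      rfl
    have hAj : ∀ i, A i = CZCP.chi (CZCP.Qz σ (m - 2) i) := by
      intro i
      simp only [hAdef]
      rw [hζ, CZCP.neg_one_pow_mod, CZCP.chi_natCast]
      congr 1
      rw [Nat.cast_add, Nat.cast_mul, hcast i, hbz i]
      norm_num
    have hCj : ∀ i, C i = CZCP.chi (CZCP.Qz σ (m - 2) i + CZCP.bz (σ (m - 3)) i) := by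
      intro i
      simp only [hCdef]
      rw [hζ, CZCP.neg_one_pow_mod, CZCP.chi_natCast]
      congr 1
      rw [Nat.cast_add, Nat.cast_mul, hcast i, hbz i]
      norm_num
    rw [hAj, hAj, hCj, hCj]
  -- conjugation facts
  have hcn : ∀ t : ℕ, (starRingEnd ℂ) ((-1 : ℂ) ^ t) = (-1 : ℂ) ^ t := by
    intro t
    rw [map_pow, map_neg, map_one]
  have hcA : ∀ j, (starRingEnd ℂ) (A j) = A j := by
    intro j
    simp only [hAdef]
    exact hcn _
  have hcC : ∀ j, (starRingEnd ℂ) (C j) = C j := by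
    intro j
    simp only [hCdef]
    exact hcn _
  have hprod : ∀ u v : ℂ, (u * ω ^ c) * (starRingEnd ℂ) (v * ω ^ c)
      = u * (starRingEnd ℂ) v := by
    intro u v
    rw [map_mul]
    linear_combination (u * (starRingEnd ℂ) v) * hK
  constructor
  · -- C1
    intro τ hτc
    rcases hτc with ⟨hτ1, hτZ⟩ | ⟨hτlo, hτhi⟩
    · -- small shifts
      have hτN : τ ≤ N := by omega
      rw [rhoC, rhoC, ← Finset.sum_add_distrib]
      rw [show 2 ^ (m - 1) + 2 - τ = 2 * N + 2 - τ by omega]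
      rw [Finset.range_eq_Ico]
      rw [← Finset.sum_Ico_consecutive _ (show (0:ℕ) ≤ 1 by omega)
        (show (1:ℕ) ≤ 2 * N + 2 - τ by omega)]
      rw [← Finset.sum_Ico_consecutive _ (show (1:ℕ) ≤ N + 1 - τ by omega)
        (show N + 1 - τ ≤ 2 * N + 2 - τ by omega)]
      rw [← Finset.sum_Ico_consecutive _ (show N + 1 - τ ≤ N + 1 by omega)
        (show N + 1 ≤ 2 * N + 2 - τ by omega)]
      rw [← Finset.sum_Ico_consecutive _ (show N + 1 ≤ 2 * N + 1 - τ by omega)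
        (show 2 * N + 1 - τ ≤ 2 * N + 2 - τ by omega)]
      have hP0 : ∑ k ∈ Finset.Ico 0 1,
          (a k * (starRingEnd ℂ) (a (k + τ)) + b k * (starRingEnd ℂ) (b (k + τ)))
          = A (τ - 1) + C (τ - 1) := by
        rw [← Finset.range_eq_Ico, Finset.sum_range_one, zero_add]
        rw [haev0, hbev0, haA τ hτ1 hτN, hbA τ hτ1 hτN, hprod, hprod, hcA, hcC]
        ring
      have hP4 : ∑ k ∈ Finset.Ico (2 * N + 1 - τ) (2 * N + 2 - τ),
          (a k * (starRingEnd ℂ) (a (k + τ)) + b k * (starRingEnd ℂ) (b (k + τ)))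
          = - C (τ - 1) - A (τ - 1) := by
        rw [Finset.sum_Ico_eq_sum_range]
        rw [show 2 * N + 2 - τ - (2 * N + 1 - τ) = 1 by omega, Finset.sum_range_one, add_zero]
        rw [show 2 * N + 1 - τ + τ = 2 * N + 1 by omega]
        rw [haE, hbE, haB (2 * N + 1 - τ) (by omega) (by omega),
          hbB (2 * N + 1 - τ) (by omega) (by omega), hprod, hprod]
        rw [show 2 * N - (2 * N + 1 - τ) = τ - 1 by omega]
        rw [map_neg, map_one]
        ring
      have hP1 : ∑ k ∈ Finset.Ico 1 (N + 1 - τ),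
          (a k * (starRingEnd ℂ) (a (k + τ)) + b k * (starRingEnd ℂ) (b (k + τ))) = 0 := by
        rw [Finset.sum_Ico_eq_sum_range]
        rw [show N + 1 - τ - 1 = N - τ by omega]
        rw [← hGolay τ hτ1]
        apply Finset.sum_congr rfl
        intro i hi
        rw [Finset.mem_range] at hi
        rw [haA (1 + i) (by omega) (by omega), haA (1 + i + τ) (by omega) (by omega),
          hbA (1 + i) (by omega) (by omega), hbA (1 + i + τ) (by omega) (by omega),
          hprod, hprod, hcA, hcC]
        rw [show 1 + i - 1 = i by omega, show 1 + i + τ - 1 = i + τ by omega]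
      have hP3 : ∑ k ∈ Finset.Ico (N + 1) (2 * N + 1 - τ),
          (a k * (starRingEnd ℂ) (a (k + τ)) + b k * (starRingEnd ℂ) (b (k + τ))) = 0 := by
        rw [Finset.sum_Ico_eq_sum_range]
        rw [show 2 * N + 1 - τ - (N + 1) = N - τ by omega]
        have hptw : ∀ i ∈ Finset.range (N - τ),
            (a (N + 1 + i) * (starRingEnd ℂ) (a (N + 1 + i + τ))
              + b (N + 1 + i) * (starRingEnd ℂ) (b (N + 1 + i + τ)))
            = A (N - τ - 1 - i) * A (N - τ - 1 - i + τ)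
              + C (N - τ - 1 - i) * C (N - τ - 1 - i + τ) := by
          intro i hi
          rw [Finset.mem_range] at hi
          rw [haB (N + 1 + i) (by omega) (by omega), haB (N + 1 + i + τ) (by omega) (by omega),
            hbB (N + 1 + i) (by omega) (by omega), hbB (N + 1 + i + τ) (by omega) (by omega),
            hprod, hprod, map_neg, hcA, hcC]
          rw [show 2 * N - (N + 1 + i) = N - τ - 1 - i + τ by omega,
            show 2 * N - (N + 1 + i + τ) = N - τ - 1 - i by omega]
          ring
        rw [Finset.sum_congr rfl hptw]
        rw [Finset.sum_range_reflect (fun j => A j * A (j + τ) + C j * C (j + τ)) (N - τ)]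
        exact hGolay τ hτ1
      have hP2 : ∑ k ∈ Finset.Ico (N + 1 - τ) (N + 1),
          (a k * (starRingEnd ℂ) (a (k + τ)) + b k * (starRingEnd ℂ) (b (k + τ))) = 0 := by
        rw [Finset.sum_Ico_eq_sum_range]
        rw [show N + 1 - (N + 1 - τ) = τ by omega]
        have hptw : ∀ i ∈ Finset.range τ,
            (a (N + 1 - τ + i) * (starRingEnd ℂ) (a (N + 1 - τ + i + τ))
              + b (N + 1 - τ + i) * (starRingEnd ℂ) (b (N + 1 - τ + i + τ)))
            = A (N - τ + i) * C (N - 1 - i) - C (N - τ + i) * A (N - 1 - i) := by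
          intro i hi
          rw [Finset.mem_range] at hi
          rw [haA (N + 1 - τ + i) (by omega) (by omega),
            haB (N + 1 - τ + i + τ) (by omega) (by omega),
            hbA (N + 1 - τ + i) (by omega) (by omega),
            hbB (N + 1 - τ + i + τ) (by omega) (by omega),
            hprod, hprod, map_neg, hcA, hcC]
          rw [show N + 1 - τ + i - 1 = N - τ + i by omega,
            show 2 * N - (N + 1 - τ + i + τ) = N - 1 - i by omega]
          ring
        rw [Finset.sum_congr rfl hptw]
        have h3 : ∀ i ∈ Finset.range τ,
            A (N - τ + (τ - 1 - i)) * C (N - 1 - (τ - 1 - i))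
              - C (N - τ + (τ - 1 - i)) * A (N - 1 - (τ - 1 - i))
            = - (A (N - τ + i) * C (N - 1 - i) - C (N - τ + i) * A (N - 1 - i)) := by
          intro i hi
          rw [Finset.mem_range] at hi
          rw [show N - τ + (τ - 1 - i) = N - 1 - i by omega,
            show N - 1 - (τ - 1 - i) = N - τ + i by omega]
          ring
        have h4 : ∑ i ∈ Finset.range τ,
            (A (N - τ + i) * C (N - 1 - i) - C (N - τ + i) * A (N - 1 - i))
            = - ∑ i ∈ Finset.range τ,
              (A (N - τ + i) * C (N - 1 - i) - C (N - τ + i) * A (N - 1 - i)) := by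
          conv_lhs => rw [← Finset.sum_range_reflect
            (fun i => A (N - τ + i) * C (N - 1 - i) - C (N - τ + i) * A (N - 1 - i)) τ]
          rw [Finset.sum_congr rfl h3]
          exact Finset.sum_neg_distrib _
        linear_combination h4 / 2
      rw [hP0, hP1, hP2, hP3, hP4]
      ring
    · -- large shifts
      have hs2 : 2 * N + 1 - τ ≤ 2 ^ (σ (m - 3)) := by omega
      have hτ2N : τ ≤ 2 * N + 1 := by omega
      rw [rhoC, rhoC, ← Finset.sum_add_distrib]
      rw [show 2 ^ (m - 1) + 2 - τ = (2 * N + 1 - τ) + 1 by omega]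
      apply Finset.sum_eq_zero
      intro k hk
      rw [Finset.mem_range] at hk
      by_cases hk0 : k = 0
      · subst hk0
        by_cases hss : 2 * N + 1 - τ = 0
        · rw [zero_add, show τ = 2 * N + 1 by omega, haev0, hbev0, haE, hbE, hprod, hprod]
          rw [map_neg, map_one]
          ring
        · rw [zero_add, haev0, hbev0, haB τ (by omega) (by omega),
            hbB τ (by omega) (by omega), hprod, hprod, map_neg, hcA, hcC]
          rw [hE (2 * N - τ) (by omega)]
          ring
      · by_cases hks : k = 2 * N + 1 - τ
        · rw [hks, show 2 * N + 1 - τ + τ = 2 * N + 1 by omega]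
          rw [haA (2 * N + 1 - τ) (by omega) (by omega),
            hbA (2 * N + 1 - τ) (by omega) (by omega),
            haE, hbE, hprod, hprod, map_neg, map_one]
          rw [hE (2 * N + 1 - τ - 1) (by omega)]
          ring
        · rw [haA k (by omega) (by omega), hbA k (by omega) (by omega),
            haB (k + τ) (by omega) (by omega), hbB (k + τ) (by omega) (by omega),
            hprod, hprod, map_neg, hcA, hcC]
          rw [hE (k - 1) (by omega), hE (2 * N - (k + τ)) (by omega)]
          ring
  · -- C2
    intro τ hτc
    obtain ⟨hτlo, hτhi⟩ := hτc
    have hs2 : 2 * N + 1 - τ ≤ 2 ^ (σ (m - 3)) := by omega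
    have hτ2N : τ ≤ 2 * N + 1 := by omega
    rw [rhoC, rhoC, ← Finset.sum_add_distrib]
    rw [show 2 ^ (m - 1) + 2 - τ = (2 * N + 1 - τ) + 1 by omega]
    apply Finset.sum_eq_zero
    intro k hk
    rw [Finset.mem_range] at hk
    by_cases hk0 : k = 0
    · subst hk0
      by_cases hss : 2 * N + 1 - τ = 0
      · rw [zero_add, show τ = 2 * N + 1 by omega, haev0, hbev0, haE, hbE, hprod, hprod]
        rw [map_neg, map_one]
        ring
      · rw [zero_add, haev0, hbev0, haB τ (by omega) (by omega),
          hbB τ (by omega) (by omega), hprod, hprod, map_neg, hcA, hcC]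
        rw [hE (2 * N - τ) (by omega)]
        ring
    · by_cases hks : k = 2 * N + 1 - τ
      · rw [hks, show 2 * N + 1 - τ + τ = 2 * N + 1 by omega]
        rw [haA (2 * N + 1 - τ) (by omega) (by omega),
          hbA (2 * N + 1 - τ) (by omega) (by omega),
          haE, hbE, hprod, hprod, map_neg, map_one]
        rw [hE (2 * N + 1 - τ - 1) (by omega)]
        ring
      · rw [haA k (by omega) (by omega), hbA k (by omega) (by omega),
          haB (k + τ) (by omega) (by omega), hbB (k + τ) (by omega) (by omega),
          hprod, hprod, map_neg, hcA, hcC]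
        rw [hE (k - 1) (by omega), hE (2 * N - (k + τ)) (by omega)]
        ring
end

section
/- Let N be even and let (a,b) be a binary GCP of length N satisfying a_i = b_i for 0 ≤ i < N/2 and a_i = −b_i for N/2 ≤ i < N. Define c_i = b_{N−1−i}, d_i = −a_{N−1−i}, and the length-2N concatenations e = a||c, f = b||d. Let x_0, x_1, y_0, y_1 be complex numbers of modulus 1 satisfying x_0 − conj(y_1) = 0, x_1 + conj(y_0) = 0, x_0 = x_1, and conj(y_0) = −conj(y_1). Define the length-(2N+2) complex sequences g = (x_0, e_0, e_1, …, e_{2N−1}, y_0) and h = (x_1, f_0, f_1, …, f_{2N−1}, y_1). Then (g,h) is a (2N+2, N/2+1)-CZCP. -/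
/-- Aperiodic cross-correlation at shift `τ` of two length-`L` real sequences
(indexed `0, …, L-1`); it vanishes for `τ ≥ L`. -/
noncomputable def rhoR (L : ℕ) (u v : ℕ → ℝ) (τ : ℕ) : ℝ :=
  ∑ k ∈ Finset.range (L - τ), u k * v (k + τ)

/-- A binary sequence of length `L`: all entries in `{+1, -1}`. -/
def IsBinary (L : ℕ) (u : ℕ → ℝ) : Prop := ∀ i < L, u i = 1 ∨ u i = -1

/-- `(u, v)` is a binary Golay complementary pair (GCP) of length `L`:
both are binary and the autocorrelation sums vanish for `1 ≤ τ ≤ L - 1`. -/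
noncomputable def IsGCP (L : ℕ) (u v : ℕ → ℝ) : Prop :=
  IsBinary L u ∧ IsBinary L v ∧
    ∀ τ : ℕ, 1 ≤ τ → τ ≤ L - 1 → rhoR L u u τ + rhoR L v v τ = 0

/-- `(u, v)` (length-`L` real sequences) is an `(L, Z)`-CZCP:
(C1) the autocorrelation sums vanish for `τ ∈ {1,…,Z} ∪ {L-Z,…,L-1}`, and
(C2) the cross-correlation sums vanish for `τ ∈ {L-Z,…,L-1}`. -/
noncomputable def IsCZCPR (L Z : ℕ) (u v : ℕ → ℝ) : Prop :=
  (∀ τ : ℕ, ((1 ≤ τ ∧ τ ≤ Z) ∨ (L - Z ≤ τ ∧ τ ≤ L - 1)) →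
    rhoR L u u τ + rhoR L v v τ = 0) ∧
  (∀ τ : ℕ, (L - Z ≤ τ ∧ τ ≤ L - 1) → rhoR L u v τ + rhoR L v u τ = 0)

private lemma reflect_sum (n : ℕ) (F G : ℕ → ℝ) (hFG : ∀ j, j < n → F j = G (n - 1 - j)) :
    ∑ j ∈ Finset.range n, F j = ∑ j ∈ Finset.range n, G j := by
  rw [← Finset.sum_range_reflect G n]
  exact Finset.sum_congr rfl (fun j hj => hFG j (Finset.mem_range.mp hj))

private lemma highAuto (N : ℕ) (a b e f : ℕ → ℝ)
    (h1 : ∀ i < N / 2, a i = b i)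
    (he : ∀ i, e i = if i < N then a i else b (N - 1 - (i - N)))
    (hf : ∀ i, f i = if i < N then b i else -a (N - 1 - (i - N)))
    (τ : ℕ) (hτ : 2*N ≤ τ + N/2) :
    rhoR (2*N) e e τ + rhoR (2*N) f f τ = 0 := by
  rw [rhoR, rhoR, ← Finset.sum_add_distrib]
  apply Finset.sum_eq_zero
  intro k hk
  have hk' : k < 2*N - τ := Finset.mem_range.mp hk
  have v1 : e k = b k := by rw [he k, if_pos (show k < N by omega)]; exact h1 k (by omega)
  have v2 : e (k+τ) = b (N - 1 - (k + τ - N)) := by rw [he (k+τ), if_neg (show ¬ (k+τ < N) by omega)]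
  have v3 : f k = b k := by rw [hf k, if_pos (show k < N by omega)]
  have v4 : f (k+τ) = -(b (N - 1 - (k + τ - N))) := by
    rw [hf (k+τ), if_neg (show ¬ (k+τ < N) by omega), h1 (N - 1 - (k + τ - N)) (by omega)]
  rw [v1, v2, v3, v4]; ring

private lemma highCross (N : ℕ) (a b e f : ℕ → ℝ)
    (h1 : ∀ i < N / 2, a i = b i)
    (he : ∀ i, e i = if i < N then a i else b (N - 1 - (i - N)))
    (hf : ∀ i, f i = if i < N then b i else -a (N - 1 - (i - N)))
    (τ : ℕ) (hτ : 2*N ≤ τ + N/2) :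
    rhoR (2*N) e f τ + rhoR (2*N) f e τ = 0 := by
  rw [rhoR, rhoR, ← Finset.sum_add_distrib]
  apply Finset.sum_eq_zero
  intro k hk
  have hk' : k < 2*N - τ := Finset.mem_range.mp hk
  have v1 : e k = b k := by rw [he k, if_pos (show k < N by omega)]; exact h1 k (by omega)
  have v2 : e (k+τ) = b (N - 1 - (k + τ - N)) := by rw [he (k+τ), if_neg (show ¬ (k+τ < N) by omega)]
  have v3 : f k = b k := by rw [hf k, if_pos (show k < N by omega)]
  have v4 : f (k+τ) = -(b (N - 1 - (k + τ - N))) := by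
    rw [hf (k+τ), if_neg (show ¬ (k+τ < N) by omega), h1 (N - 1 - (k + τ - N)) (by omega)]
  rw [v1, v2, v3, v4]; ring

private lemma lowAuto (N : ℕ) (hN : 2 ≤ N) (a b e f : ℕ → ℝ)
    (hG : ∀ τ : ℕ, 1 ≤ τ → τ ≤ N - 1 → rhoR N a a τ + rhoR N b b τ = 0)
    (he : ∀ i, e i = if i < N then a i else b (N - 1 - (i - N)))
    (hf : ∀ i, f i = if i < N then b i else -a (N - 1 - (i - N)))
    (τ : ℕ) (hτ1 : 1 ≤ τ) (hτN : τ ≤ N) :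
    rhoR (2*N) e e τ + rhoR (2*N) f f τ = 0 := by
  have hG' : rhoR N a a τ + rhoR N b b τ = 0 := by
    rcases eq_or_lt_of_le hτN with hEq | hLt
    · rw [hEq]; simp [rhoR]
    · exact hG τ hτ1 (by omega)
  rw [rhoR, rhoR, ← Finset.sum_add_distrib, Finset.range_eq_Ico,
      ← Finset.sum_Ico_consecutive _ (Nat.zero_le (N-τ)) (show N-τ ≤ 2*N-τ by omega),
      ← Finset.sum_Ico_consecutive _ (show N-τ ≤ N by omega) (show N ≤ 2*N-τ by omega)]
  have hP1 : ∑ k ∈ Finset.Ico 0 (N-τ), (e k * e (k+τ) + f k * f (k+τ))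
      = rhoR N a a τ + rhoR N b b τ := by
    rw [rhoR, rhoR, ← Finset.sum_add_distrib, Finset.range_eq_Ico]
    apply Finset.sum_congr rfl
    intro k hk
    have hk' := (Finset.mem_Ico.mp hk).2
    have v1 : e k = a k := by rw [he k, if_pos (show k < N by omega)]
    have v2 : e (k+τ) = a (k+τ) := by rw [he (k+τ), if_pos (show k+τ < N by omega)]
    have v3 : f k = b k := by rw [hf k, if_pos (show k < N by omega)]
    have v4 : f (k+τ) = b (k+τ) := by rw [hf (k+τ), if_pos (show k+τ < N by omega)]
    rw [v1, v2, v3, v4]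
  have hP2 : ∑ k ∈ Finset.Ico (N-τ) N, (e k * e (k+τ) + f k * f (k+τ)) = 0 := by
    rw [Finset.sum_Ico_eq_sum_range]
    have hc : N - (N - τ) = τ := by omega
    rw [hc]
    have hstep : ∀ m ∈ Finset.range τ,
        (e (N-τ+m) * e (N-τ+m+τ) + f (N-τ+m) * f (N-τ+m+τ))
        = a (N-τ+m) * b (N-1-m) - b (N-τ+m) * a (N-1-m) := by
      intro m hm
      have hm' := Finset.mem_range.mp hm
      have v1 : e (N-τ+m) = a (N-τ+m) := by
        rw [he (N-τ+m), if_pos (show N-τ+m < N by omega)]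
      have v2 : e (N-τ+m+τ) = b (N-1-m) := by
        rw [he (N-τ+m+τ), if_neg (show ¬ (N-τ+m+τ < N) by omega)]
        congr 1; omega
      have v3 : f (N-τ+m) = b (N-τ+m) := by
        rw [hf (N-τ+m), if_pos (show N-τ+m < N by omega)]
      have v4 : f (N-τ+m+τ) = -(a (N-1-m)) := by
        rw [hf (N-τ+m+τ), if_neg (show ¬ (N-τ+m+τ < N) by omega)]
        congr 2; omega
      rw [v1, v2, v3, v4]; ring
    rw [Finset.sum_congr rfl hstep, Finset.sum_sub_distrib]
    have key := reflect_sum τ (fun m => a (N-τ+m) * b (N-1-m))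
        (fun m => b (N-τ+m) * a (N-1-m)) (by
      intro j hj
      have i1 : N - τ + (τ - 1 - j) = N-1-j := by omega
      have i2 : N - 1 - (τ - 1 - j) = N-τ+j := by omega
      rw [i1, i2]; ring)
    rw [key, sub_self]
  have hP3 : ∑ k ∈ Finset.Ico N (2*N-τ), (e k * e (k+τ) + f k * f (k+τ))
      = rhoR N a a τ + rhoR N b b τ := by
    rw [Finset.sum_Ico_eq_sum_range]
    have hc : 2*N - τ - N = N - τ := by omega
    rw [hc, rhoR, rhoR, ← Finset.sum_add_distrib]
    have key := reflect_sum (N-τ) (fun i => e (N+i) * e (N+i+τ) + f (N+i) * f (N+i+τ))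
        (fun j => a j * a (j+τ) + b j * b (j+τ)) (by
      intro i hi
      have v1 : e (N+i) = b (N-1-i) := by
        rw [he (N+i), if_neg (show ¬ (N+i < N) by omega)]
        congr 1; omega
      have v2 : e (N+i+τ) = b (N-1-(i+τ)) := by
        rw [he (N+i+τ), if_neg (show ¬ (N+i+τ < N) by omega)]
        congr 1; omega
      have v3 : f (N+i) = -(a (N-1-i)) := by
        rw [hf (N+i), if_neg (show ¬ (N+i < N) by omega)]
        congr 2; omega
      have v4 : f (N+i+τ) = -(a (N-1-(i+τ))) := by
        rw [hf (N+i+τ), if_neg (show ¬ (N+i+τ < N) by omega)]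
        congr 2; omega
      have i1 : N - τ - 1 - i + τ = N-1-i := by omega
      have i2 : N - τ - 1 - i = N-1-(i+τ) := by omega
      rw [v1, v2, v3, v4, i1, i2]; ring)
    rw [key]
  rw [hP1, hP2, hP3, hG']
  ring

private lemma decompC (N τ : ℕ) (hτ1 : 1 ≤ τ) (hτ2 : τ ≤ 2*N)
    (p p' q q' : ℂ) (E F : ℕ → ℝ) (u v : ℕ → ℂ)
    (hu : ∀ i, u i = if i = 0 then p else if i ≤ 2*N then ((E (i-1) : ℝ) : ℂ) else q)
    (hv : ∀ i, v i = if i = 0 then p' else if i ≤ 2*N then ((F (i-1) : ℝ) : ℂ) else q') :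
    rhoC (2*N+2) u v τ
      = p * ((F (τ-1) : ℝ) : ℂ) + ((rhoR (2*N) E F τ : ℝ) : ℂ)
        + ((E (2*N-τ) : ℝ) : ℂ) * (starRingEnd ℂ) q' := by
  have h2 : 2*N+2-τ = (2*N-τ)+1+1 := by omega
  rw [rhoC, h2, Finset.sum_range_succ, Finset.sum_range_succ']
  have hfirst : u 0 * (starRingEnd ℂ) (v (0 + τ)) = p * ((F (τ-1) : ℝ) : ℂ) := by
    rw [hu 0, hv (0+τ), if_pos rfl, if_neg (by omega), if_pos (by omega), Complex.conj_ofReal]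
    norm_num
  have hlast : u (2*N-τ+1) * (starRingEnd ℂ) (v (2*N-τ+1+τ))
      = ((E (2*N-τ) : ℝ):ℂ) * (starRingEnd ℂ) q' := by
    rw [hu, hv, if_neg (by omega), if_pos (by omega), if_neg (by omega), if_neg (by omega)]
    norm_num
  have hmid : ∀ k ∈ Finset.range (2*N-τ), u (k+1) * (starRingEnd ℂ) (v (k+1+τ))
      = ((E k : ℝ):ℂ) * ((F (k+τ) : ℝ):ℂ) := by
    intro k hk
    have hk' := Finset.mem_range.mp hk
    rw [hu, hv, if_neg (by omega), if_pos (by omega), if_neg (by omega),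
        if_pos (by omega), Complex.conj_ofReal]
    have i1 : k+1-1 = k := by omega
    have i2 : k+1+τ-1 = k+τ := by omega
    rw [i1, i2]
  have hsum : ((rhoR (2*N) E F τ : ℝ) : ℂ)
      = ∑ k ∈ Finset.range (2*N-τ), ((E k :ℝ):ℂ) * ((F (k+τ):ℝ):ℂ) := by
    rw [rhoR]; push_cast; rfl
  rw [Finset.sum_congr rfl hmid, hfirst, hlast, hsum]
  ring

/-- Theorem 2 of the paper: Let `N` be even and `(a, b)` a binary GCP of
length `N` with `a_i = b_i` for `i < N/2` and `a_i = -b_i` for `N/2 ≤ i < N`.  Put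
`c_i = b_{N-1-i}`, `d_i = -a_{N-1-i}`, `e = a‖c`, `f = b‖d` (length `2N`).  Let
`x₀, x₁, y₀, y₁` be unimodular complex numbers with `x₀ - conj y₁ = 0`,
`x₁ + conj y₀ = 0`, `x₀ = x₁` and `conj y₀ = -conj y₁`.  Then the length-`(2N+2)`
sequences `g = (x₀, e₀, …, e_{2N-1}, y₀)` and `h = (x₁, f₀, …, f_{2N-1}, y₁)` form a
`(2N+2, N/2+1)`-CZCP. -/
theorem stmt_6 (N : ℕ) (hN2 : 2 ∣ N) (hN : 0 < N) (a b : ℕ → ℝ) (hab : IsGCP N a b)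
    (h1 : ∀ i < N / 2, a i = b i) (h2 : ∀ i, N / 2 ≤ i → i < N → a i = -b i)
    (e f : ℕ → ℝ)
    (he : ∀ i, e i = if i < N then a i else b (N - 1 - (i - N)))
    (hf : ∀ i, f i = if i < N then b i else -a (N - 1 - (i - N)))
    (x0 x1 y0 y1 : ℂ)
    (hx0 : ‖x0‖ = 1) (hx1 : ‖x1‖ = 1)
    (hy0 : ‖y0‖ = 1) (hy1 : ‖y1‖ = 1)
    (cc1 : x0 - (starRingEnd ℂ) y1 = 0) (cc2 : x1 + (starRingEnd ℂ) y0 = 0)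
    (cc3 : x0 = x1) (cc4 : (starRingEnd ℂ) y0 = -(starRingEnd ℂ) y1)
    (g h : ℕ → ℂ)
    (hg : ∀ i, g i = if i = 0 then x0 else if i ≤ 2 * N then ((e (i - 1) : ℝ) : ℂ) else y0)
    (hh : ∀ i, h i = if i = 0 then x1 else if i ≤ 2 * N then ((f (i - 1) : ℝ) : ℂ) else y1) :
    IsCZCP (2 * N + 2) (N / 2 + 1) g h := by
  have hNge : 2 ≤ N := by omega
  obtain ⟨hBa, hBb, hG⟩ := hab
  have hcy1 : (starRingEnd ℂ) y1 = x0 := (sub_eq_zero.mp cc1).symm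
  have hcy0 : (starRingEnd ℂ) y0 = -x0 := by rw [cc4, hcy1]
  have hx10 : x1 = x0 := cc3.symm
  constructor
  · intro τ hτ
    rcases hτ with ⟨ha1, ha2⟩ | ⟨hb1, hb2⟩
    · -- 1 ≤ τ ≤ N/2 + 1
      have hτ2N : τ ≤ 2*N := by omega
      rw [decompC N τ ha1 hτ2N x0 x0 y0 y0 e e g g hg hg,
          decompC N τ ha1 hτ2N x1 x1 y1 y1 f f h h hh hh]
      have v1 : e (τ-1) = a (τ-1) := by rw [he (τ-1), if_pos (show τ-1 < N by omega)]
      have v2 : f (τ-1) = b (τ-1) := by rw [hf (τ-1), if_pos (show τ-1 < N by omega)]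
      have v3 : e (2*N-τ) = b (τ-1) := by
        rw [he (2*N-τ), if_neg (show ¬ (2*N-τ < N) by omega)]; congr 1; omega
      have v4 : f (2*N-τ) = -(a (τ-1)) := by
        rw [hf (2*N-τ), if_neg (show ¬ (2*N-τ < N) by omega)]; congr 2; omega
      have hA := lowAuto N hNge a b e f hG he hf τ ha1 (by omega)
      have hAC : ((rhoR (2*N) e e τ : ℝ) : ℂ) + ((rhoR (2*N) f f τ : ℝ) : ℂ) = 0 := by
        rw [← Complex.ofReal_add, hA, Complex.ofReal_zero]
      rw [v1, v2, v3, v4, hcy0, hcy1, hx10]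
      push_cast
      linear_combination hAC
    · -- 2*N+2 - (N/2+1) ≤ τ ≤ 2*N+1
      by_cases hend : τ = 2*N+1
      · subst hend
        have hone : 2*N+2 - (2*N+1) = 1 := by omega
        rw [rhoC, rhoC, hone, Finset.sum_range_one, Finset.sum_range_one]
        rw [hg 0, hg (0 + (2*N+1)), hh 0, hh (0 + (2*N+1))]
        rw [if_pos rfl, if_pos rfl, if_neg (by omega), if_neg (by omega),
            if_neg (by omega), if_neg (by omega)]
        rw [hcy0, hcy1, hx10]; ring
      · have hτ1 : 1 ≤ τ := by omega
        have hτ2N : τ ≤ 2*N := by omega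
        rw [decompC N τ hτ1 hτ2N x0 x0 y0 y0 e e g g hg hg,
            decompC N τ hτ1 hτ2N x1 x1 y1 y1 f f h h hh hh]
        have v1 : e (τ-1) = b (2*N-τ) := by
          rw [he (τ-1), if_neg (show ¬ (τ-1 < N) by omega)]; congr 1; omega
        have v2 : f (τ-1) = -(a (2*N-τ)) := by
          rw [hf (τ-1), if_neg (show ¬ (τ-1 < N) by omega)]; congr 2; omega
        have v3 : e (2*N-τ) = a (2*N-τ) := by
          rw [he (2*N-τ), if_pos (show 2*N-τ < N by omega)]
        have v4 : f (2*N-τ) = b (2*N-τ) := by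
          rw [hf (2*N-τ), if_pos (show 2*N-τ < N by omega)]
        have hA := highAuto N a b e f h1 he hf τ (by omega)
        have hAC : ((rhoR (2*N) e e τ : ℝ) : ℂ) + ((rhoR (2*N) f f τ : ℝ) : ℂ) = 0 := by
          rw [← Complex.ofReal_add, hA, Complex.ofReal_zero]
        have hj : a (2*N-τ) = b (2*N-τ) := h1 (2*N-τ) (by omega)
        rw [v1, v2, v3, v4, hj, hcy0, hcy1, hx10]
        push_cast
        linear_combination hAC
  · intro τ ⟨hb1, hb2⟩
    by_cases hend : τ = 2*N+1
    · subst hend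
      have hone : 2*N+2 - (2*N+1) = 1 := by omega
      rw [rhoC, rhoC, hone, Finset.sum_range_one, Finset.sum_range_one]
      rw [hg 0, hh (0 + (2*N+1)), hh 0, hg (0 + (2*N+1))]
      rw [if_pos rfl, if_pos rfl, if_neg (by omega), if_neg (by omega),
          if_neg (by omega), if_neg (by omega)]
      rw [hcy0, hcy1, hx10]; ring
    · have hτ1 : 1 ≤ τ := by omega
      have hτ2N : τ ≤ 2*N := by omega
      rw [decompC N τ hτ1 hτ2N x0 x1 y0 y1 e f g h hg hh,
          decompC N τ hτ1 hτ2N x1 x0 y1 y0 f e h g hh hg]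
      have v1 : e (τ-1) = b (2*N-τ) := by
        rw [he (τ-1), if_neg (show ¬ (τ-1 < N) by omega)]; congr 1; omega
      have v2 : f (τ-1) = -(a (2*N-τ)) := by
        rw [hf (τ-1), if_neg (show ¬ (τ-1 < N) by omega)]; congr 2; omega
      have v3 : e (2*N-τ) = a (2*N-τ) := by
        rw [he (2*N-τ), if_pos (show 2*N-τ < N by omega)]
      have v4 : f (2*N-τ) = b (2*N-τ) := by
        rw [hf (2*N-τ), if_pos (show 2*N-τ < N by omega)]
      have hA := highCross N a b e f h1 he hf τ (by omega)
      have hAC : ((rhoR (2*N) e f τ : ℝ) : ℂ) + ((rhoR (2*N) f e τ : ℝ) : ℂ) = 0 := by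
        rw [← Complex.ofReal_add, hA, Complex.ofReal_zero]
      rw [v1, v2, v3, v4, hcy0, hcy1, hx10]
      push_cast
      linear_combination hAC
end

section
/- Let β ≥ 1 and let (a,b) be the binary pair of length N = 10^β defined recursively by (a^{(1)},b^{(1)}) = K_{10} and (a^{(j+1)},b^{(j+1)}) = Turyn(K_{10}, (a^{(j)},b^{(j)})) for 1 ≤ j < β, with (a,b) = (a^{(β)},b^{(β)}). Define c_i = b_{N−1−i}, d_i = −a_{N−1−i}, e = a||c, f = b||d (length 2N). Let x_0, x_1, y_0, y_1 be complex numbers of modulus 1 satisfying x_0 − conj(y_1) = 0, x_1 + conj(y_0) = 0, x_0 = x_1, and conj(y_0) = −conj(y_1). Define g = (x_0, e_0, …, e_{2N−1}, y_0) and h = (x_1, f_0, …, f_{2N−1}, y_1) of length 2N+2. Then (g,h) is a (2N+2, 4N/10+1)-CZCP. -/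
/-- First sequence of the length-10 Golay kernel `K₁₀`: `(+,+,-,+,-,+,-,-,+,+)`. -/
noncomputable def K10a : ℕ → ℝ := fun i =>
  (([1, 1, -1, 1, -1, 1, -1, -1, 1, 1] : List ℝ).getD i 0)

/-- Second sequence of the length-10 Golay kernel `K₁₀`: `(+,+,-,+,+,+,+,+,-,-)`. -/
noncomputable def K10b : ℕ → ℝ := fun i =>
  (([1, 1, -1, 1, 1, 1, 1, 1, -1, -1] : List ℝ).getD i 0)

/-- First sequence of the length-26 Golay kernel `K₂₆`. -/
noncomputable def K26a : ℕ → ℝ := fun i =>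
  (([1, 1, 1, 1, -1, 1, 1, -1, -1, 1, -1, 1, -1, 1, -1, -1, 1, -1, 1, 1, 1, -1, -1, 1, 1, 1] :
    List ℝ).getD i 0)

/-- Second sequence of the length-26 Golay kernel `K₂₆`. -/
noncomputable def K26b : ℕ → ℝ := fun i =>
  (([1, 1, 1, 1, -1, 1, 1, -1, -1, 1, -1, 1, 1, 1, 1, 1, -1, 1, -1, -1, -1, 1, 1, -1, -1, -1] :
    List ℝ).getD i 0)

/-- Turyn's construction: given `(p, q)` of length `M` and `(c, d)` of length `K`, the
resulting pair `(e, f)` of length `K·M` is given (at index `kM + j`, i.e. `k = i / M`,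
`j = i % M`) by `e_{kM+j} = c_k (p_j + q_j)/2 - d_{K-1-k} (q_j - p_j)/2` and
`f_{kM+j} = d_k (p_j + q_j)/2 + c_{K-1-k} (q_j - p_j)/2`. -/
noncomputable def turynPair (M K : ℕ) (p q c d : ℕ → ℝ) : (ℕ → ℝ) × (ℕ → ℝ) :=
  (fun i => c (i / M) * (p (i % M) + q (i % M)) / 2
      - d (K - 1 - i / M) * (q (i % M) - p (i % M)) / 2,
   fun i => d (i / M) * (p (i % M) + q (i % M)) / 2
      + c (K - 1 - i / M) * (q (i % M) - p (i % M)) / 2)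

noncomputable def zext (L : ℕ) (u : ℕ → ℝ) : ℕ → ℝ := fun i => if i < L then u i else 0

lemma rhoR_eq_zext (L : ℕ) (u v : ℕ → ℝ) (τ : ℕ) :
    rhoR L u v τ = ∑ k ∈ Finset.range L, zext L u k * zext L v (k + τ) := by
  rw [rhoR]
  rw [← Finset.sum_subset (Finset.range_subset_range.2 (Nat.sub_le L τ))
    (by
      intro k hk hnk
      simp only [Finset.mem_range] at hk hnk
      have : ¬ (k + τ < L) := by omega
      simp [zext, this])]
  apply Finset.sum_congr rfl
  intro k hk
  simp only [Finset.mem_range] at hk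
  have h1 : k < L := by omega
  have h2 : k + τ < L := by omega
  simp [zext, h1, h2]

lemma zext_restrict (K u : ℕ) (F G : ℕ → ℝ) :
    ∑ k ∈ Finset.range K, F k * zext K G (k + u)
      = ∑ k ∈ Finset.range (K - u), F k * G (k + u) := by
  rw [← Finset.sum_subset (Finset.range_subset_range.2 (Nat.sub_le K u))
    (by
      intro k hk hnk
      simp only [Finset.mem_range] at hk hnk
      have : ¬ (k + u < K) := by omega
      simp [zext, this])]
  apply Finset.sum_congr rfl
  intro k hk
  simp only [Finset.mem_range] at hk
  have : k + u < K := by omega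
  simp [zext, this]

lemma rho_rev (K u : ℕ) (d : ℕ → ℝ) :
    rhoR K (fun m => d (K-1-m)) (fun m => d (K-1-m)) u = rhoR K d d u := by
  unfold rhoR
  rw [← Finset.sum_range_reflect (fun k => d (K-1-k) * d (K-1-(k+u))) (K-u)]
  apply Finset.sum_congr rfl
  intro k hk
  simp only [Finset.mem_range] at hk
  have h1 : K - 1 - (K - u - 1 - k) = k + u := by omega
  have h2 : K - 1 - (K - u - 1 - k + u) = k := by omega
  rw [h1, h2]; ring

lemma sum_revrev (K u : ℕ) (d : ℕ → ℝ) :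
    ∑ k ∈ Finset.range K, zext K (fun m => d (K-1-m)) k * zext K (fun m => d (K-1-m)) (k+u)
      = rhoR K d d u := by
  rw [← rhoR_eq_zext, rho_rev]

lemma sum_zz (K u : ℕ) (c : ℕ → ℝ) :
    ∑ k ∈ Finset.range K, zext K c k * zext K c (k+u) = rhoR K c c u :=
  (rhoR_eq_zext K c c u).symm

lemma cross1 (K u : ℕ) (c d : ℕ → ℝ) :
    ∑ k ∈ Finset.range K, zext K c k * zext K (fun m => d (K-1-m)) (k + u)
      = ∑ k ∈ Finset.range K, zext K d k * zext K (fun m => c (K-1-m)) (k + u) := by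
  rw [zext_restrict, zext_restrict]
  have L1 : ∑ k ∈ Finset.range (K-u), zext K c k * d (K-1-(k+u))
      = ∑ k ∈ Finset.range (K-u), c k * d (K-1-u-k) := by
    apply Finset.sum_congr rfl
    intro k hk
    simp only [Finset.mem_range] at hk
    have h1 : k < K := by omega
    have h2 : K - 1 - (k+u) = K - 1 - u - k := by omega
    simp [zext, h1, h2]
  have L2 : ∑ k ∈ Finset.range (K-u), zext K d k * c (K-1-(k+u))
      = ∑ k ∈ Finset.range (K-u), d k * c (K-1-u-k) := by
    apply Finset.sum_congr rfl
    intro k hk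
    simp only [Finset.mem_range] at hk
    have h1 : k < K := by omega
    have h2 : K - 1 - (k+u) = K - 1 - u - k := by omega
    simp [zext, h1, h2]
  rw [L1, L2, ← Finset.sum_range_reflect (fun k => d k * c (K-1-u-k)) (K-u)]
  apply Finset.sum_congr rfl
  intro k hk
  simp only [Finset.mem_range] at hk
  have h1 : K - u - 1 - k = K - 1 - u - k := by omega
  rw [h1]
  have h2 : K - 1 - u - (K - 1 - u - k) = k := by omega
  rw [h2]; ring

lemma cross2 (K u : ℕ) (c d : ℕ → ℝ) :
    ∑ k ∈ Finset.range K, zext K (fun m => d (K-1-m)) k * zext K c (k + u)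
      = ∑ k ∈ Finset.range K, zext K (fun m => c (K-1-m)) k * zext K d (k + u) := by
  rw [zext_restrict, zext_restrict]
  have L1 : ∑ k ∈ Finset.range (K-u), zext K (fun m => d (K-1-m)) k * c (k+u)
      = ∑ k ∈ Finset.range (K-u), d (K-1-k) * c (k+u) := by
    apply Finset.sum_congr rfl
    intro k hk
    simp only [Finset.mem_range] at hk
    have h1 : k < K := by omega
    simp [zext, h1]
  have L2 : ∑ k ∈ Finset.range (K-u), zext K (fun m => c (K-1-m)) k * d (k+u)
      = ∑ k ∈ Finset.range (K-u), c (K-1-k) * d (k+u) := by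
    apply Finset.sum_congr rfl
    intro k hk
    simp only [Finset.mem_range] at hk
    have h1 : k < K := by omega
    simp [zext, h1]
  rw [L1, L2, ← Finset.sum_range_reflect (fun k => d (K-1-k) * c (k+u)) (K-u)]
  apply Finset.sum_congr rfl
  intro k hk
  simp only [Finset.mem_range] at hk
  have h1 : K - 1 - (K - u - 1 - k) = k + u := by omega
  have h2 : K - u - 1 - k + u = K - 1 - k := by omega
  rw [h1, h2]; ring

noncomputable def sK : ℕ → ℝ := fun j => (K10a j + K10b j) / 2
noncomputable def tK : ℕ → ℝ := fun j => (K10b j - K10a j) / 2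

lemma sK_vals : sK 0 = 1 ∧ sK 1 = 1 ∧ sK 2 = -1 ∧ sK 3 = 1 ∧ sK 4 = 0 ∧ sK 5 = 1 ∧
    sK 6 = 0 ∧ sK 7 = 0 ∧ sK 8 = 0 ∧ sK 9 = 0 := by
  norm_num [sK, K10a, K10b]

lemma tK_vals : tK 0 = 0 ∧ tK 1 = 0 ∧ tK 2 = 0 ∧ tK 3 = 0 ∧ tK 4 = 1 ∧ tK 5 = 0 ∧
    tK 6 = 1 ∧ tK 7 = 1 ∧ tK 8 = -1 ∧ tK 9 = -1 := by
  norm_num [tK, K10a, K10b]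

lemma W0_lemma (v : ℕ) (hv : v < 10) :
    (∑ j ∈ Finset.range (10 - v), sK j * sK (j + v))
      + ∑ j ∈ Finset.range (10 - v), tK j * tK (j + v)
    = if v = 0 then 10 else 0 := by
  obtain ⟨s0,s1,s2,s3,s4,s5,s6,s7,s8,s9⟩ := sK_vals
  obtain ⟨t0,t1,t2,t3,t4,t5,t6,t7,t8,t9⟩ := tK_vals
  interval_cases v <;>
    norm_num [Finset.sum_range_succ, s0,s1,s2,s3,s4,s5,s6,s7,s8,s9,t0,t1,t2,t3,t4,t5,t6,t7,t8,t9]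

lemma W1_lemma (v : ℕ) (hv : v < 10) :
    (∑ j ∈ Finset.range v, sK (10 - v + j) * sK j)
      + ∑ j ∈ Finset.range v, tK (10 - v + j) * tK j = 0 := by
  obtain ⟨s0,s1,s2,s3,s4,s5,s6,s7,s8,s9⟩ := sK_vals
  obtain ⟨t0,t1,t2,t3,t4,t5,t6,t7,t8,t9⟩ := tK_vals
  interval_cases v <;>
    norm_num [Finset.sum_range_succ, s0,s1,s2,s3,s4,s5,s6,s7,s8,s9,t0,t1,t2,t3,t4,t5,t6,t7,t8,t9]

lemma sum_range_mul_split (K : ℕ) (g : ℕ → ℝ) :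
    ∑ i ∈ Finset.range (10 * K), g i
      = ∑ k ∈ Finset.range K, ∑ j ∈ Finset.range 10, g (10 * k + j) := by
  induction K with
  | zero => simp
  | succ n ih =>
      rw [Finset.sum_range_succ, ← ih, show 10 * (n+1) = 10*n + 10 by ring,
        Finset.sum_range_add]

lemma sum_range_split10 (v : ℕ) (hv : v ≤ 10) (f : ℕ → ℝ) :
    ∑ j ∈ Finset.range 10, f j
      = ∑ j ∈ Finset.range (10 - v), f j + ∑ j ∈ Finset.range v, f (10 - v + j) := by
  rw [← Finset.sum_range_add, show 10 - v + v = 10 by omega]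

lemma factor_sum (n : ℕ) (s1 t1 s2 t2 : ℕ → ℝ) (c1 d1 c2 d2 c1' d1' c2' d2' : ℝ) :
    ∑ j ∈ Finset.range n,
      ((c1 * s1 j - d1 * t1 j) * (c2 * s2 j - d2 * t2 j)
        + (c1' * s1 j + d1' * t1 j) * (c2' * s2 j + d2' * t2 j))
    = (c1*c2 + c1'*c2') * ∑ j ∈ Finset.range n, s1 j * s2 j
      + (d1*d2 + d1'*d2') * ∑ j ∈ Finset.range n, t1 j * t2 j
      + (-(c1*d2) + c1'*d2') * ∑ j ∈ Finset.range n, s1 j * t2 j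
      + (-(d1*c2) + d1'*c2') * ∑ j ∈ Finset.range n, t1 j * s2 j := by
  rw [Finset.mul_sum, Finset.mul_sum, Finset.mul_sum, Finset.mul_sum,
    ← Finset.sum_add_distrib, ← Finset.sum_add_distrib, ← Finset.sum_add_distrib]
  apply Finset.sum_congr rfl
  intro j _
  ring

lemma ebar_eq (K : ℕ) (c d : ℕ → ℝ) (n : ℕ) :
    zext (10 * K) (turynPair 10 K K10a K10b c d).1 n
      = zext K c (n / 10) * sK (n % 10)
        - zext K (fun m => d (K - 1 - m)) (n / 10) * tK (n % 10) := by
  by_cases h : n < 10 * K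
  · have h1 : n / 10 < K := by omega
    simp only [zext, turynPair, sK, tK, if_pos h, if_pos h1]
    ring
  · have h1 : ¬ (n / 10 < K) := by omega
    simp only [zext, if_neg h, if_neg h1]
    ring

lemma fbar_eq (K : ℕ) (c d : ℕ → ℝ) (n : ℕ) :
    zext (10 * K) (turynPair 10 K K10a K10b c d).2 n
      = zext K d (n / 10) * sK (n % 10)
        + zext K (fun m => c (K - 1 - m)) (n / 10) * tK (n % 10) := by
  by_cases h : n < 10 * K
  · have h1 : n / 10 < K := by omega
    simp only [zext, turynPair, sK, tK, if_pos h, if_pos h1]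
    ring
  · have h1 : ¬ (n / 10 < K) := by omega
    simp only [zext, if_neg h, if_neg h1]
    ring
lemma turyn_rho (K : ℕ) (c d : ℕ → ℝ)
    (hcd : ∀ u, 1 ≤ u → rhoR K c c u + rhoR K d d u = 0) (τ : ℕ) (hτ : 1 ≤ τ) :
    rhoR (10*K) (turynPair 10 K K10a K10b c d).1 (turynPair 10 K K10a K10b c d).1 τ
      + rhoR (10*K) (turynPair 10 K K10a K10b c d).2 (turynPair 10 K K10a K10b c d).2 τ
      = 0 := by
  obtain ⟨u, v, hv, rfl⟩ : ∃ u v, v < 10 ∧ τ = 10*u + v :=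
    ⟨τ/10, τ%10, by omega, by omega⟩
  rw [rhoR_eq_zext, rhoR_eq_zext, sum_range_mul_split, sum_range_mul_split,
    ← Finset.sum_add_distrib]
  have key : ∀ k : ℕ,
      ((∑ j ∈ Finset.range 10,
          zext (10*K) (turynPair 10 K K10a K10b c d).1 (10*k+j)
            * zext (10*K) (turynPair 10 K K10a K10b c d).1 (10*k+j + (10*u+v)))
        + ∑ j ∈ Finset.range 10,
          zext (10*K) (turynPair 10 K K10a K10b c d).2 (10*k+j)
            * zext (10*K) (turynPair 10 K K10a K10b c d).2 (10*k+j + (10*u+v)))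
      = (zext K c k * zext K c (k+u) + zext K d k * zext K d (k+u))
          * ∑ j ∈ Finset.range (10-v), sK j * sK (j+v)
        + (zext K (fun m => d (K-1-m)) k * zext K (fun m => d (K-1-m)) (k+u)
            + zext K (fun m => c (K-1-m)) k * zext K (fun m => c (K-1-m)) (k+u))
          * ∑ j ∈ Finset.range (10-v), tK j * tK (j+v)
        + (-(zext K c k * zext K (fun m => d (K-1-m)) (k+u))
            + zext K d k * zext K (fun m => c (K-1-m)) (k+u))
          * ∑ j ∈ Finset.range (10-v), sK j * tK (j+v)
        + (-(zext K (fun m => d (K-1-m)) k * zext K c (k+u))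
            + zext K (fun m => c (K-1-m)) k * zext K d (k+u))
          * ∑ j ∈ Finset.range (10-v), tK j * sK (j+v)
        + ((zext K c k * zext K c (k+u+1) + zext K d k * zext K d (k+u+1))
            * ∑ j ∈ Finset.range v, sK (10-v+j) * sK j
          + (zext K (fun m => d (K-1-m)) k * zext K (fun m => d (K-1-m)) (k+u+1)
              + zext K (fun m => c (K-1-m)) k * zext K (fun m => c (K-1-m)) (k+u+1))
            * ∑ j ∈ Finset.range v, tK (10-v+j) * tK j
          + (-(zext K c k * zext K (fun m => d (K-1-m)) (k+u+1))
              + zext K d k * zext K (fun m => c (K-1-m)) (k+u+1))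
            * ∑ j ∈ Finset.range v, sK (10-v+j) * tK j
          + (-(zext K (fun m => d (K-1-m)) k * zext K c (k+u+1))
              + zext K (fun m => c (K-1-m)) k * zext K d (k+u+1))
            * ∑ j ∈ Finset.range v, tK (10-v+j) * sK j) := by
    intro k
    rw [sum_range_split10 v (by omega), sum_range_split10 v (by omega)]
    have he1 : ∑ j ∈ Finset.range (10-v),
        zext (10*K) (turynPair 10 K K10a K10b c d).1 (10*k+j)
          * zext (10*K) (turynPair 10 K K10a K10b c d).1 (10*k+j + (10*u+v))
        = ∑ j ∈ Finset.range (10-v),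
          ((zext K c k * sK j - zext K (fun m => d (K-1-m)) k * tK j)
            * (zext K c (k+u) * sK (j+v) - zext K (fun m => d (K-1-m)) (k+u) * tK (j+v))) := by
      apply Finset.sum_congr rfl
      intro j hj
      simp only [Finset.mem_range] at hj
      rw [ebar_eq, ebar_eq]
      have d1 : (10*k+j)/10 = k := by omega
      have m1 : (10*k+j)%10 = j := by omega
      have d2 : (10*k+j+(10*u+v))/10 = k+u := by omega
      have m2 : (10*k+j+(10*u+v))%10 = j+v := by omega
      rw [d1, m1, d2, m2]
    have hf1 : ∑ j ∈ Finset.range (10-v),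
        zext (10*K) (turynPair 10 K K10a K10b c d).2 (10*k+j)
          * zext (10*K) (turynPair 10 K K10a K10b c d).2 (10*k+j + (10*u+v))
        = ∑ j ∈ Finset.range (10-v),
          ((zext K d k * sK j + zext K (fun m => c (K-1-m)) k * tK j)
            * (zext K d (k+u) * sK (j+v) + zext K (fun m => c (K-1-m)) (k+u) * tK (j+v))) := by
      apply Finset.sum_congr rfl
      intro j hj
      simp only [Finset.mem_range] at hj
      rw [fbar_eq, fbar_eq]
      have d1 : (10*k+j)/10 = k := by omega
      have m1 : (10*k+j)%10 = j := by omega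
      have d2 : (10*k+j+(10*u+v))/10 = k+u := by omega
      have m2 : (10*k+j+(10*u+v))%10 = j+v := by omega
      rw [d1, m1, d2, m2]
    have he2 : ∑ j ∈ Finset.range v,
        zext (10*K) (turynPair 10 K K10a K10b c d).1 (10*k+(10-v+j))
          * zext (10*K) (turynPair 10 K K10a K10b c d).1 (10*k+(10-v+j) + (10*u+v))
        = ∑ j ∈ Finset.range v,
          ((zext K c k * sK (10-v+j) - zext K (fun m => d (K-1-m)) k * tK (10-v+j))
            * (zext K c (k+u+1) * sK j - zext K (fun m => d (K-1-m)) (k+u+1) * tK j)) := by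
      apply Finset.sum_congr rfl
      intro j hj
      simp only [Finset.mem_range] at hj
      rw [ebar_eq, ebar_eq]
      have d1 : (10*k+(10-v+j))/10 = k := by omega
      have m1 : (10*k+(10-v+j))%10 = 10-v+j := by omega
      have d2 : (10*k+(10-v+j)+(10*u+v))/10 = k+u+1 := by omega
      have m2 : (10*k+(10-v+j)+(10*u+v))%10 = j := by omega
      rw [d1, m1, d2, m2]
    have hf2 : ∑ j ∈ Finset.range v,
        zext (10*K) (turynPair 10 K K10a K10b c d).2 (10*k+(10-v+j))
          * zext (10*K) (turynPair 10 K K10a K10b c d).2 (10*k+(10-v+j) + (10*u+v))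
        = ∑ j ∈ Finset.range v,
          ((zext K d k * sK (10-v+j) + zext K (fun m => c (K-1-m)) k * tK (10-v+j))
            * (zext K d (k+u+1) * sK j + zext K (fun m => c (K-1-m)) (k+u+1) * tK j)) := by
      apply Finset.sum_congr rfl
      intro j hj
      simp only [Finset.mem_range] at hj
      rw [fbar_eq, fbar_eq]
      have d1 : (10*k+(10-v+j))/10 = k := by omega
      have m1 : (10*k+(10-v+j))%10 = 10-v+j := by omega
      have d2 : (10*k+(10-v+j)+(10*u+v))/10 = k+u+1 := by omega
      have m2 : (10*k+(10-v+j)+(10*u+v))%10 = j := by omega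
      rw [d1, m1, d2, m2]
    rw [he1, hf1, he2, hf2]
    have c1 := factor_sum (10-v) sK tK (fun j => sK (j+v)) (fun j => tK (j+v))
      (zext K c k) (zext K (fun m => d (K-1-m)) k) (zext K c (k+u)) (zext K (fun m => d (K-1-m)) (k+u))
      (zext K d k) (zext K (fun m => c (K-1-m)) k) (zext K d (k+u)) (zext K (fun m => c (K-1-m)) (k+u))
    have c2 := factor_sum v (fun j => sK (10-v+j)) (fun j => tK (10-v+j)) sK tK
      (zext K c k) (zext K (fun m => d (K-1-m)) k) (zext K c (k+u+1)) (zext K (fun m => d (K-1-m)) (k+u+1))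
      (zext K d k) (zext K (fun m => c (K-1-m)) k) (zext K d (k+u+1)) (zext K (fun m => c (K-1-m)) (k+u+1))
    rw [Finset.sum_add_distrib] at c1 c2
    linarith [c1, c2]
  rw [Finset.sum_congr rfl (fun k _ => key k)]
  simp only [Finset.sum_add_distrib, ← Finset.sum_mul, Finset.sum_neg_distrib, add_assoc]
  rw [sum_revrev K u c, sum_revrev K u d, sum_revrev K (u+1) c, sum_revrev K (u+1) d,
    sum_zz K u c, sum_zz K u d, sum_zz K (u+1) c, sum_zz K (u+1) d,
    cross1 K u c d, cross1 K (u+1) c d, cross2 K u c d, cross2 K (u+1) c d]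
  have hW0 := W0_lemma v hv
  have hW1 := W1_lemma v hv
  by_cases hv0 : v = 0
  · subst hv0
    rw [if_pos rfl] at hW0
    have hR := hcd u (by omega)
    linear_combination (rhoR K c c u + rhoR K d d u) * hW0
      + (rhoR K c c (u+1) + rhoR K d d (u+1)) * hW1 + 10 * hR
  · rw [if_neg hv0] at hW0
    linear_combination (rhoR K c c u + rhoR K d d u) * hW0
      + (rhoR K c c (u+1) + rhoR K d d (u+1)) * hW1
lemma K10a_vals : K10a 0 = 1 ∧ K10a 1 = 1 ∧ K10a 2 = -1 ∧ K10a 3 = 1 ∧ K10a 4 = -1 ∧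
    K10a 5 = 1 ∧ K10a 6 = -1 ∧ K10a 7 = -1 ∧ K10a 8 = 1 ∧ K10a 9 = 1 := by
  norm_num [K10a]

lemma K10b_vals : K10b 0 = 1 ∧ K10b 1 = 1 ∧ K10b 2 = -1 ∧ K10b 3 = 1 ∧ K10b 4 = 1 ∧
    K10b 5 = 1 ∧ K10b 6 = 1 ∧ K10b 7 = 1 ∧ K10b 8 = -1 ∧ K10b 9 = -1 := by
  norm_num [K10b]

lemma P_inv (β : ℕ) (hβ : 1 ≤ β) (P : ℕ → (ℕ → ℝ) × (ℕ → ℝ))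
    (hP1 : P 1 = (K10a, K10b)) :
    ∀ _ : (∀ j, 1 ≤ j → j < β →
      P (j + 1) = turynPair 10 (10 ^ j) K10a K10b (P j).1 (P j).2),
    (∀ i < 4 * 10 ^ (β - 1), (P β).1 i = (P β).2 i) ∧
    (∀ i, 6 * 10 ^ (β - 1) ≤ i → i < 10 ^ β → (P β).1 i = -(P β).2 i) ∧
    (∀ τ, 1 ≤ τ → rhoR (10 ^ β) (P β).1 (P β).1 τ
      + rhoR (10 ^ β) (P β).2 (P β).2 τ = 0) := by
  induction β, hβ using Nat.le_induction with
  | base =>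
      intro _
      obtain ⟨a0,a1,a2,a3,a4,a5,a6,a7,a8,a9⟩ := K10a_vals
      obtain ⟨b0,b1,b2,b3,b4,b5,b6,b7,b8,b9⟩ := K10b_vals
      rw [hP1]
      refine ⟨?_, ?_, ?_⟩
      · intro i hi
        norm_num at hi ⊢
        interval_cases i <;> simp [a0,a1,a2,a3,b0,b1,b2,b3]
      · intro i hi1 hi2
        norm_num at hi1 hi2 ⊢
        interval_cases i <;>
          simp [a6,a7,a8,a9,b6,b7,b8,b9] <;> norm_num
      · intro τ hτ
        norm_num
        by_cases hτ2 : τ < 10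
        · interval_cases τ <;>
            norm_num [rhoR, Finset.sum_range_succ,
              a0,a1,a2,a3,a4,a5,a6,a7,a8,a9,b0,b1,b2,b3,b4,b5,b6,b7,b8,b9]
        · rw [rhoR, rhoR, show 10 - τ = 0 by omega]
          simp
  | succ n hn ih =>
      intro hPrec
      have hrec := hPrec n (by omega) (by omega)
      obtain ⟨I1, I2, I3⟩ := ih (fun j h1 h2 => hPrec j h1 (by omega))
      have hpos : 0 < 10 ^ (n-1) := by positivity
      have h10 : 10 ^ n = 10 * 10 ^ (n-1) := by
        have := pow_succ' 10 (n-1)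
        rwa [show n - 1 + 1 = n by omega] at this
      rw [hrec]
      simp only [Nat.add_sub_cancel]
      refine ⟨?_, ?_, ?_⟩
      · intro i hi
        simp only [turynPair]
        have hk1 : i / 10 < 4 * 10 ^ (n-1) := by omega
        have hk2a : 6 * 10 ^ (n-1) ≤ 10 ^ n - 1 - i / 10 := by omega
        have hk2b : 10 ^ n - 1 - i / 10 < 10 ^ n := by omega
        rw [I1 _ hk1, I2 _ hk2a hk2b]
        ring
      · intro i hi1 hi2
        have hpow : 10 ^ (n+1) = 10 * 10 ^ n := pow_succ' 10 n
        simp only [turynPair]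
        have hk1 : 6 * 10 ^ (n-1) ≤ i / 10 := by omega
        have hk1b : i / 10 < 10 ^ n := by omega
        have hk2 : 10 ^ n - 1 - i / 10 < 4 * 10 ^ (n-1) := by omega
        rw [I2 _ hk1 hk1b, I1 _ hk2]
        ring
      · intro τ hτ
        have hpow : 10 ^ (n+1) = 10 * 10 ^ n := pow_succ' 10 n
        rw [hpow]
        exact turyn_rho (10 ^ n) (P n).1 (P n).2 I3 τ hτ

lemma rhoC_split (N τ : ℕ) (hτ1 : 1 ≤ τ) (hτ2 : τ ≤ 2*N) (u v : ℕ → ℂ)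
    (ur vr : ℕ → ℝ) (x y : ℂ)
    (hu0 : u 0 = x)
    (hum : ∀ i, 1 ≤ i → i ≤ 2*N → u i = ((ur (i-1) : ℝ) : ℂ))
    (hvm : ∀ i, 1 ≤ i → i ≤ 2*N → v i = ((vr (i-1) : ℝ) : ℂ))
    (hvy : v (2*N+1) = y) :
    rhoC (2*N+2) u v τ
      = x * ((vr (τ-1) : ℝ) : ℂ) + ((rhoR (2*N) ur vr τ : ℝ) : ℂ)
        + ((ur (2*N-τ) : ℝ) : ℂ) * (starRingEnd ℂ) y := by
  rw [rhoC, show 2*N+2-τ = (2*N-τ)+1+1 by omega, Finset.sum_range_succ,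
    Finset.sum_range_succ']
  have t1 : u 0 * (starRingEnd ℂ) (v (0 + τ)) = x * ((vr (τ-1) : ℝ) : ℂ) := by
    rw [hu0, zero_add, hvm τ hτ1 hτ2, Complex.conj_ofReal]
  have t2 : u (2*N-τ+1) * (starRingEnd ℂ) (v (2*N-τ+1+τ)) = ((ur (2*N-τ) : ℝ) : ℂ) * (starRingEnd ℂ) y := by
    rw [show 2*N-τ+1+τ = 2*N+1 by omega, hvy,
      hum (2*N-τ+1) (by omega) (by omega), show 2*N-τ+1-1 = 2*N-τ by omega]
  have t3 : ∑ k ∈ Finset.range (2*N-τ), u (k+1) * (starRingEnd ℂ) (v (k+1+τ))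
      = ((rhoR (2*N) ur vr τ : ℝ) : ℂ) := by
    rw [rhoR, Complex.ofReal_sum]
    apply Finset.sum_congr rfl
    intro k hk
    simp only [Finset.mem_range] at hk
    rw [hum (k+1) (by omega) (by omega), hvm (k+1+τ) (by omega) (by omega),
      show k+1-1 = k by omega, show k+1+τ-1 = k+τ by omega,
      Complex.conj_ofReal, Complex.ofReal_mul]
  rw [t1, t2, t3]
  ring
section mids
variable (N K : ℕ) (a b e f : ℕ → ℝ)

lemma mid_low (hNK : N = 10*K) (hK : 1 ≤ K)
    (he : ∀ i, e i = if i < N then a i else b (N-1-(i-N)))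
    (hf : ∀ i, f i = if i < N then b i else -a (N-1-(i-N)))
    (hR : ∀ τ, 1 ≤ τ → rhoR N a a τ + rhoR N b b τ = 0)
    (τ : ℕ) (hτ1 : 1 ≤ τ) (hτ2 : τ ≤ N) :
    rhoR (2*N) e e τ + rhoR (2*N) f f τ = 0 := by
  rw [rhoR, rhoR, show 2*N-τ = (N-τ)+τ+(N-τ) by omega, Finset.sum_range_add,
    Finset.sum_range_add, Finset.sum_range_add, Finset.sum_range_add]
  have hA1 : ∑ k ∈ Finset.range (N-τ), e k * e (k+τ) = rhoR N a a τ := by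
    rw [rhoR]
    apply Finset.sum_congr rfl
    intro k hk
    simp only [Finset.mem_range] at hk
    rw [he k, he (k+τ), if_pos (by omega : k < N), if_pos (by omega : k+τ < N)]
  have hB1 : ∑ k ∈ Finset.range (N-τ), f k * f (k+τ) = rhoR N b b τ := by
    rw [rhoR]
    apply Finset.sum_congr rfl
    intro k hk
    simp only [Finset.mem_range] at hk
    rw [hf k, hf (k+τ), if_pos (by omega : k < N), if_pos (by omega : k+τ < N)]
  have hA3 : ∑ k ∈ Finset.range (N-τ), e (N-τ+τ+k) * e (N-τ+τ+k+τ) = rhoR N b b τ := by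
    rw [rhoR, ← Finset.sum_range_reflect (fun k => b k * b (k+τ)) (N-τ)]
    apply Finset.sum_congr rfl
    intro k hk
    simp only [Finset.mem_range] at hk
    rw [he, he, if_neg (by omega), if_neg (by omega),
      show N-1-(N-τ+τ+k-N) = N-1-k by omega,
      show N-1-(N-τ+τ+k+τ-N) = N-1-k-τ by omega,
      show N-τ-1-k = N-1-k-τ by omega,
      show N-1-k-τ+τ = N-1-k by omega]
    ring
  have hB3 : ∑ k ∈ Finset.range (N-τ), f (N-τ+τ+k) * f (N-τ+τ+k+τ) = rhoR N a a τ := by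
    rw [rhoR, ← Finset.sum_range_reflect (fun k => a k * a (k+τ)) (N-τ)]
    apply Finset.sum_congr rfl
    intro k hk
    simp only [Finset.mem_range] at hk
    rw [hf, hf, if_neg (by omega), if_neg (by omega),
      show N-1-(N-τ+τ+k-N) = N-1-k by omega,
      show N-1-(N-τ+τ+k+τ-N) = N-1-k-τ by omega,
      show N-τ-1-k = N-1-k-τ by omega,
      show N-1-k-τ+τ = N-1-k by omega]
    ring
  have hA2 : ∑ k ∈ Finset.range τ, e (N-τ+k) * e (N-τ+k+τ)
      = ∑ k ∈ Finset.range τ, a (N-τ+k) * b (N-1-k) := by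
    apply Finset.sum_congr rfl
    intro k hk
    simp only [Finset.mem_range] at hk
    rw [he, he, if_pos (by omega), if_neg (by omega),
      show N-1-(N-τ+k+τ-N) = N-1-k by omega]
  have hB2 : ∑ k ∈ Finset.range τ, f (N-τ+k) * f (N-τ+k+τ)
      = ∑ k ∈ Finset.range τ, -(b (N-τ+k) * a (N-1-k)) := by
    apply Finset.sum_congr rfl
    intro k hk
    simp only [Finset.mem_range] at hk
    rw [hf, hf, if_pos (by omega), if_neg (by omega),
      show N-1-(N-τ+k+τ-N) = N-1-k by omega]
    ring
  have hAB2 : (∑ k ∈ Finset.range τ, a (N-τ+k) * b (N-1-k))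
      + ∑ k ∈ Finset.range τ, -(b (N-τ+k) * a (N-1-k)) = 0 := by
    rw [← Finset.sum_add_distrib]
    have hrefl := Finset.sum_range_reflect
      (fun k => a (N-τ+k) * b (N-1-k) + -(b (N-τ+k) * a (N-1-k))) τ
    have hneg : ∑ k ∈ Finset.range τ,
        (fun k => a (N-τ+k) * b (N-1-k) + -(b (N-τ+k) * a (N-1-k))) (τ-1-k)
        = ∑ k ∈ Finset.range τ,
          -(a (N-τ+k) * b (N-1-k) + -(b (N-τ+k) * a (N-1-k))) := by
      apply Finset.sum_congr rfl
      intro k hk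
      simp only [Finset.mem_range] at hk
      simp only
      rw [show N-τ+(τ-1-k) = N-1-k by omega, show N-1-(τ-1-k) = N-τ+k by omega]
      ring
    rw [hneg, Finset.sum_neg_distrib] at hrefl
    linarith
  have hRτ := hR τ hτ1
  linarith [hA1, hB1, hA2, hB2, hA3, hB3, hAB2]
end mids
section mids2
variable (N K : ℕ) (a b e f : ℕ → ℝ)

lemma mid_high_auto (hNK : N = 10*K) (hK : 1 ≤ K)
    (he : ∀ i, e i = if i < N then a i else b (N-1-(i-N)))
    (hf : ∀ i, f i = if i < N then b i else -a (N-1-(i-N)))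
    (inv1 : ∀ i < 4*K, a i = b i)
    (τ : ℕ) (hτ1 : 2*N+1-4*K ≤ τ) (hτ2 : τ ≤ 2*N) :
    rhoR (2*N) e e τ + rhoR (2*N) f f τ = 0 := by
  rw [rhoR, rhoR, ← Finset.sum_add_distrib]
  apply Finset.sum_eq_zero
  intro k hk
  simp only [Finset.mem_range] at hk
  rw [he k, he (k+τ), hf k, hf (k+τ), if_pos (by omega : k < N),
    if_pos (by omega : k < N), if_neg (by omega : ¬ (k+τ < N)),
    if_neg (by omega : ¬ (k+τ < N))]
  rw [inv1 k (by omega), inv1 (N-1-(k+τ-N)) (by omega)]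
  ring

lemma mid_high_cross (hNK : N = 10*K) (hK : 1 ≤ K)
    (he : ∀ i, e i = if i < N then a i else b (N-1-(i-N)))
    (hf : ∀ i, f i = if i < N then b i else -a (N-1-(i-N)))
    (inv1 : ∀ i < 4*K, a i = b i)
    (τ : ℕ) (hτ1 : 2*N+1-4*K ≤ τ) (hτ2 : τ ≤ 2*N) :
    rhoR (2*N) e f τ + rhoR (2*N) f e τ = 0 := by
  rw [rhoR, rhoR, ← Finset.sum_add_distrib]
  apply Finset.sum_eq_zero
  intro k hk
  simp only [Finset.mem_range] at hk
  rw [he k, hf (k+τ), hf k, he (k+τ), if_pos (by omega : k < N),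
    if_pos (by omega : k < N), if_neg (by omega : ¬ (k+τ < N)),
    if_neg (by omega : ¬ (k+τ < N))]
  rw [inv1 k (by omega), inv1 (N-1-(k+τ-N)) (by omega)]
  ring
end mids2

/-- Theorem 3 of the paper, case `N = 10^β`: let `(a, b)` be the binary GCP
of length `N = 10^β` obtained by iterating Turyn's construction on the kernel `K₁₀`,
put `c_i = b_{N-1-i}`, `d_i = -a_{N-1-i}`, `e = a‖c`, `f = b‖d` (length `2N`), and let
`x₀, x₁, y₀, y₁` be unimodular complex numbers with `x₀ - conj y₁ = 0`,
`x₁ + conj y₀ = 0`, `x₀ = x₁`, `conj y₀ = -conj y₁`.  Then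
`g = (x₀, e₀, …, e_{2N-1}, y₀)` and `h = (x₁, f₀, …, f_{2N-1}, y₁)` form a
`(2N+2, 4N/10+1)`-CZCP. -/
theorem stmt_7 (β : ℕ) (hβ : 1 ≤ β)
    (P : ℕ → (ℕ → ℝ) × (ℕ → ℝ))
    (hP1 : P 1 = (K10a, K10b))
    (hPrec : ∀ j, 1 ≤ j → j < β →
      P (j + 1) = turynPair 10 (10 ^ j) K10a K10b (P j).1 (P j).2)
    (N : ℕ) (hN : N = 10 ^ β)
    (a b : ℕ → ℝ) (ha : a = (P β).1) (hb : b = (P β).2)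
    (e f : ℕ → ℝ)
    (he : ∀ i, e i = if i < N then a i else b (N - 1 - (i - N)))
    (hf : ∀ i, f i = if i < N then b i else -a (N - 1 - (i - N)))
    (x0 x1 y0 y1 : ℂ)
    (hx0 : ‖x0‖ = 1) (hx1 : ‖x1‖ = 1)
    (hy0 : ‖y0‖ = 1) (hy1 : ‖y1‖ = 1)
    (cc1 : x0 - (starRingEnd ℂ) y1 = 0) (cc2 : x1 + (starRingEnd ℂ) y0 = 0)
    (cc3 : x0 = x1) (cc4 : (starRingEnd ℂ) y0 = -(starRingEnd ℂ) y1)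
    (g h : ℕ → ℂ)
    (hg : ∀ i, g i = if i = 0 then x0 else if i ≤ 2 * N then ((e (i - 1) : ℝ) : ℂ) else y0)
    (hh : ∀ i, h i = if i = 0 then x1 else if i ≤ 2 * N then ((f (i - 1) : ℝ) : ℂ) else y1) :
    IsCZCP (2 * N + 2) (4 * N / 10 + 1) g h := by
  have hK : 1 ≤ 10 ^ (β - 1) := Nat.one_le_pow _ _ (by norm_num)
  have hNK : N = 10 * 10 ^ (β - 1) := by
    rw [hN]
    have hps := pow_succ' 10 (β - 1)
    rwa [show β - 1 + 1 = β by omega] at hps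
  obtain ⟨I1, I2, I3⟩ := P_inv β hβ P hP1 hPrec
  rw [← ha, ← hb] at I1 I2 I3
  rw [← hN] at I2 I3
  have hZ : 4 * N / 10 = 4 * 10 ^ (β - 1) := by omega
  rw [hZ]
  have hg0 : g 0 = x0 := by rw [hg 0]; simp
  have hh0 : h 0 = x1 := by rw [hh 0]; simp
  have hgm : ∀ i, 1 ≤ i → i ≤ 2*N → g i = ((e (i-1) : ℝ) : ℂ) := by
    intro i hi1 hi2; rw [hg i, if_neg (by omega), if_pos hi2]
  have hhm : ∀ i, 1 ≤ i → i ≤ 2*N → h i = ((f (i-1) : ℝ) : ℂ) := by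
    intro i hi1 hi2; rw [hh i, if_neg (by omega), if_pos hi2]
  have hgy : g (2*N+1) = y0 := by rw [hg (2*N+1), if_neg (by omega), if_neg (by omega)]
  have hhy : h (2*N+1) = y1 := by rw [hh (2*N+1), if_neg (by omega), if_neg (by omega)]
  constructor
  · rintro τ (⟨h1, h2⟩ | ⟨h1, h2⟩)
    · -- low range : 1 ≤ τ ≤ 4K+1
      have hτN : τ ≤ 2*N := by omega
      rw [rhoC_split N τ h1 hτN g g e e x0 y0 hg0 hgm hgm hgy,
          rhoC_split N τ h1 hτN h h f f x1 y1 hh0 hhm hhm hhy]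
      have hmid := mid_low N (10 ^ (β-1)) a b e f hNK hK he hf I3 τ h1 (by omega)
      have hmidC : ((rhoR (2*N) e e τ : ℝ) : ℂ) + ((rhoR (2*N) f f τ : ℝ) : ℂ) = 0 := by
        exact_mod_cast hmid
      have he1 : e (τ-1) = a (τ-1) := by rw [he, if_pos (by omega)]
      have hf1 : f (τ-1) = b (τ-1) := by rw [hf, if_pos (by omega)]
      have he2 : e (2*N-τ) = b (τ-1) := by
        rw [he, if_neg (by omega), show N-1-(2*N-τ-N) = τ-1 by omega]
      have hf2 : f (2*N-τ) = -a (τ-1) := by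
        rw [hf, if_neg (by omega), show N-1-(2*N-τ-N) = τ-1 by omega]
      rw [he1, hf1, he2, hf2]
      push_cast
      linear_combination ((a (τ-1) : ℝ) : ℂ) * cc1 + ((b (τ-1) : ℝ) : ℂ) * cc2 + hmidC
    · -- high range
      by_cases hend : τ = 2*N+1
      · subst hend
        rw [rhoC, rhoC, show 2*N+2-(2*N+1) = 1 by omega, Finset.sum_range_one, Finset.sum_range_one]
        simp only [zero_add]
        rw [hg0, hh0, hgy, hhy]
        linear_combination x0 * cc4 - (starRingEnd ℂ) y1 * cc3
      · have h1' : 1 ≤ τ := by omega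
        have hτN : τ ≤ 2*N := by omega
        rw [rhoC_split N τ h1' hτN g g e e x0 y0 hg0 hgm hgm hgy,
            rhoC_split N τ h1' hτN h h f f x1 y1 hh0 hhm hhm hhy]
        have hmid := mid_high_auto N (10 ^ (β-1)) a b e f hNK hK he hf I1 τ
          (by omega) (by omega)
        have hmidC : ((rhoR (2*N) e e τ : ℝ) : ℂ) + ((rhoR (2*N) f f τ : ℝ) : ℂ) = 0 := by
          exact_mod_cast hmid
        have he1 : e (τ-1) = b (2*N-τ) := by
          rw [he, if_neg (by omega), show N-1-(τ-1-N) = 2*N-τ by omega]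
        have hf1 : f (τ-1) = -b (2*N-τ) := by
          rw [hf, if_neg (by omega), show N-1-(τ-1-N) = 2*N-τ by omega,
            I1 (2*N-τ) (by omega)]
        have he2 : e (2*N-τ) = b (2*N-τ) := by
          rw [he, if_pos (by omega), I1 (2*N-τ) (by omega)]
        have hf2 : f (2*N-τ) = b (2*N-τ) := by rw [hf, if_pos (by omega)]
        rw [he1, hf1, he2, hf2]
        push_cast
        linear_combination hmidC + ((b (2*N-τ) : ℝ) : ℂ) * cc3 + ((b (2*N-τ) : ℝ) : ℂ) * cc4
  · rintro τ ⟨h1, h2⟩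
    by_cases hend : τ = 2*N+1
    · subst hend
      rw [rhoC, rhoC, show 2*N+2-(2*N+1) = 1 by omega, Finset.sum_range_one, Finset.sum_range_one]
      simp only [zero_add]
      rw [hg0, hh0, hgy, hhy]
      linear_combination (starRingEnd ℂ) y1 * cc1 + (starRingEnd ℂ) y0 * cc2
        + ((starRingEnd ℂ) y1 - (starRingEnd ℂ) y0) * cc4
    · have h1' : 1 ≤ τ := by omega
      have hτN : τ ≤ 2*N := by omega
      rw [rhoC_split N τ h1' hτN g h e f x0 y1 hg0 hgm hhm hhy,
          rhoC_split N τ h1' hτN h g f e x1 y0 hh0 hhm hgm hgy]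
      have hmid := mid_high_cross N (10 ^ (β-1)) a b e f hNK hK he hf I1 τ
        (by omega) (by omega)
      have hmidC : ((rhoR (2*N) e f τ : ℝ) : ℂ) + ((rhoR (2*N) f e τ : ℝ) : ℂ) = 0 := by
        exact_mod_cast hmid
      have he1 : e (τ-1) = b (2*N-τ) := by
        rw [he, if_neg (by omega), show N-1-(τ-1-N) = 2*N-τ by omega]
      have hf1 : f (τ-1) = -b (2*N-τ) := by
        rw [hf, if_neg (by omega), show N-1-(τ-1-N) = 2*N-τ by omega,
          I1 (2*N-τ) (by omega)]
      have he2 : e (2*N-τ) = b (2*N-τ) := by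
        rw [he, if_pos (by omega), I1 (2*N-τ) (by omega)]
      have hf2 : f (2*N-τ) = b (2*N-τ) := by rw [hf, if_pos (by omega)]
      rw [he1, hf1, he2, hf2]
      push_cast
      linear_combination hmidC - ((b (2*N-τ) : ℝ) : ℂ) * cc3 + ((b (2*N-τ) : ℝ) : ℂ) * cc4
end

section
/- Let γ ≥ 1 and let (a,b) be the binary pair of length N = 26^γ defined recursively by (a^{(1)},b^{(1)}) = K_{26} and (a^{(j+1)},b^{(j+1)}) = Turyn(K_{26}, (a^{(j)},b^{(j)})) for 1 ≤ j < γ, with (a,b) = (a^{(γ)},b^{(γ)}). Define c_i = b_{N−1−i}, d_i = −a_{N−1−i}, e = a||c, f = b||d (length 2N). Let x_0, x_1, y_0, y_1 be complex numbers of modulus 1 satisfying x_0 − conj(y_1) = 0, x_1 + conj(y_0) = 0, x_0 = x_1, and conj(y_0) = −conj(y_1). Define g = (x_0, e_0, …, e_{2N−1}, y_0) and h = (x_1, f_0, …, f_{2N−1}, y_1) of length 2N+2. Then (g,h) is a (2N+2, 12N/26+1)-CZCP. -/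
open Finset

lemma aux_rhoR_zero {L τ : ℕ} (h : L ≤ τ) (u v : ℕ → ℝ) : rhoR L u v τ = 0 := by
  simp [rhoR, Nat.sub_eq_zero_of_le h]

lemma aux_rhoR_pad (L : ℕ) (u v : ℕ → ℝ) (τ : ℕ) :
    rhoR L u v τ = ∑ i ∈ Finset.range L, u i * (if i + τ < L then v (i + τ) else 0) := by
  unfold rhoR
  rw [← Finset.sum_subset (Finset.range_subset_range.2 (Nat.sub_le L τ)) (fun i hi hi2 => ?_)]
  · exact Finset.sum_congr rfl fun i hi => by
      rw [if_pos (Nat.lt_sub_iff_add_lt.1 (Finset.mem_range.1 hi))]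
  · rw [if_neg (by simp only [Finset.mem_range] at hi hi2; omega), mul_zero]

lemma aux_sum_range_mul (K M : ℕ) (f : ℕ → ℝ) :
    ∑ i ∈ Finset.range (K * M), f i
      = ∑ k ∈ Finset.range K, ∑ j ∈ Finset.range M, f (k * M + j) := by
  induction K with
  | zero => simp
  | succ K ih =>
      rw [show (K+1) * M = K * M + M by ring, Finset.sum_range_add, ih,
        Finset.sum_range_succ]

lemma aux_sum_range_split (M r : ℕ) (hr : r ≤ M) (f : ℕ → ℝ) :
    ∑ j ∈ Finset.range M, f j
      = (∑ j ∈ Finset.range (M - r), f j) + ∑ j ∈ Finset.range r, f ((M - r) + j) := by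
  rw [← Finset.sum_range_add, Nat.sub_add_cancel hr]

lemma aux_restrict_pad (K s : ℕ) (w : ℕ → ℝ) :
    ∑ k ∈ Finset.range K, (if k + s < K then (1:ℝ) else 0) * w k
      = ∑ k ∈ Finset.range (K - s), w k := by
  rw [← Finset.sum_subset (Finset.range_subset_range.2 (Nat.sub_le K s)) (fun k hk hk2 => ?_)]
  · exact Finset.sum_congr rfl fun k hk => by
      rw [if_pos (Nat.lt_sub_iff_add_lt.1 (Finset.mem_range.1 hk)), one_mul]
  · rw [if_neg (by simp only [Finset.mem_range] at hk hk2; omega), zero_mul]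

lemma aux_rev_corr (K s : ℕ) (u v : ℕ → ℝ) :
    ∑ k ∈ Finset.range (K - s), u (K - 1 - k) * v (K - 1 - (k + s)) = rhoR K v u s := by
  unfold rhoR
  rw [← Finset.sum_range_reflect (fun m => v m * u (m + s)) (K - s)]
  exact Finset.sum_congr rfl fun k hk => by
    have hk' := Finset.mem_range.1 hk
    rw [show K - s - 1 - k = K - 1 - (k+s) by omega, show K - 1 - (k+s) + s = K - 1 - k by omega]
    ring

lemma aux_rev_swap (K s : ℕ) (u v : ℕ → ℝ) :
    ∑ k ∈ Finset.range (K - s), u k * v (K - 1 - (k + s))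
      = ∑ k ∈ Finset.range (K - s), v k * u (K - 1 - (k + s)) := by
  rw [← Finset.sum_range_reflect (fun m => v m * u (K - 1 - (m + s))) (K - s)]
  exact Finset.sum_congr rfl fun k hk => by
    have hk' := Finset.mem_range.1 hk
    rcases Nat.eq_zero_or_pos (K - s) with h0 | h0
    · omega
    · rw [show K - 1 - (K - s - 1 - k + s) = k by omega, show K - s - 1 - k = K - 1 - (k + s) by omega]
      ring

lemma aux_swap_conv (n : ℕ) (U V : ℕ → ℝ) :
    ∑ k ∈ Finset.range n, U k * V (n - 1 - k) = ∑ k ∈ Finset.range n, V k * U (n - 1 - k) := by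
  rw [← Finset.sum_range_reflect (fun m => V m * U (n - 1 - m)) n]
  exact Finset.sum_congr rfl fun k hk => by
    have hk' := Finset.mem_range.1 hk
    rw [show n - 1 - (n - 1 - k) = k by omega]
    ring

lemma aux_expand4 (S T : Finset ℕ) (A B A' B' P Q P' Q' : ℕ → ℝ) :
    (∑ k ∈ S, ∑ j ∈ T, (A k * P j + B k * Q j) * (A' k * P' j + B' k * Q' j))
      = (∑ k ∈ S, A k * A' k) * (∑ j ∈ T, P j * P' j)
      + (∑ k ∈ S, A k * B' k) * (∑ j ∈ T, P j * Q' j)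
      + (∑ k ∈ S, B k * A' k) * (∑ j ∈ T, Q j * P' j)
      + (∑ k ∈ S, B k * B' k) * (∑ j ∈ T, Q j * Q' j) := by
  simp only [Finset.sum_mul_sum, ← Finset.sum_add_distrib]
  exact Finset.sum_congr rfl fun k _ => Finset.sum_congr rfl fun j _ => by ring

lemma aux_block_part (K s : ℕ) (S2 : Finset ℕ) (A B P Q P' Q' : ℕ → ℝ) :
    (∑ k ∈ Finset.range K, ∑ j ∈ S2,
      (A k * P j + B k * Q j) *
        ((if k + s < K then (1:ℝ) else 0) * (A (k + s) * P' j + B (k + s) * Q' j)))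
    = (∑ k ∈ Finset.range (K - s), A k * A (k + s)) * (∑ j ∈ S2, P j * P' j)
    + (∑ k ∈ Finset.range (K - s), A k * B (k + s)) * (∑ j ∈ S2, P j * Q' j)
    + (∑ k ∈ Finset.range (K - s), B k * A (k + s)) * (∑ j ∈ S2, Q j * P' j)
    + (∑ k ∈ Finset.range (K - s), B k * B (k + s)) * (∑ j ∈ S2, Q j * Q' j) := by
  have h1 : ∀ k, (∑ j ∈ S2,
      (A k * P j + B k * Q j) *
        ((if k + s < K then (1:ℝ) else 0) * (A (k + s) * P' j + B (k + s) * Q' j)))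
      = (if k + s < K then (1:ℝ) else 0) *
          ∑ j ∈ S2, (A k * P j + B k * Q j) * (A (k + s) * P' j + B (k + s) * Q' j) := by
    intro k
    rw [Finset.mul_sum]
    exact Finset.sum_congr rfl fun j _ => by ring
  rw [Finset.sum_congr rfl fun k _ => h1 k, aux_restrict_pad K s
    (fun k => ∑ j ∈ S2, (A k * P j + B k * Q j) * (A (k + s) * P' j + B (k + s) * Q' j))]
  exact aux_expand4 (Finset.range (K - s)) S2 A B (fun k => A (k + s)) (fun k => B (k + s)) P Q P' Q'

lemma aux_pad_shift (M K s r τ : ℕ) (hM : 0 < M) (hτ : τ = M * s + r) (hr : r < M)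
    (w : ℕ → ℝ) (A B P Q : ℕ → ℝ)
    (hw : ∀ k j, j < M → w (k * M + j) = A k * P j + B k * Q j)
    (k j : ℕ) (hj : j < M) :
    (if k * M + j + τ < K * M then w (k * M + j + τ) else 0)
      = if j + r < M then
          (if k + s < K then (1:ℝ) else 0) * (A (k + s) * P (j + r) + B (k + s) * Q (j + r))
        else
          (if k + s + 1 < K then (1:ℝ) else 0) *
            (A (k + s + 1) * P (j + r - M) + B (k + s + 1) * Q (j + r - M)) := by
  by_cases hc : j + r < M
  · have hidx : k * M + j + τ = (k + s) * M + (j + r) := by rw [hτ]; ring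
    rw [if_pos hc, hidx]
    by_cases hk : k + s < K
    · rw [if_pos (by calc (k+s)*M + (j+r) < (k+s)*M + M := by omega
            _ = (k+s+1)*M := by ring
            _ ≤ K * M := Nat.mul_le_mul_right M hk), hw (k+s) (j+r) hc, if_pos hk, one_mul]
    · rw [if_neg (by
        have : K * M ≤ (k+s) * M := Nat.mul_le_mul_right M (Nat.le_of_not_lt hk)
        omega), if_neg hk, zero_mul]
  · have hj2 : j + r - M < M := by omega
    have hidx : k * M + j + τ = (k + s + 1) * M + (j + r - M) := by
      have h2 : M + (j + r - M) = j + r := by omega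
      calc k * M + j + τ = (k + s) * M + (j + r) := by rw [hτ]; ring
        _ = (k + s) * M + (M + (j + r - M)) := by rw [h2]
        _ = (k + s + 1) * M + (j + r - M) := by ring
    rw [if_neg hc, hidx]
    by_cases hk : k + s + 1 < K
    · rw [if_pos (by calc (k+s+1)*M + (j+r-M) < (k+s+1)*M + M := by omega
            _ = (k+s+1+1)*M := by ring
            _ ≤ K * M := Nat.mul_le_mul_right M hk), hw (k+s+1) (j+r-M) hj2, if_pos hk, one_mul]
    · rw [if_neg (by
        have : K * M ≤ (k+s+1) * M := Nat.mul_le_mul_right M (Nat.le_of_not_lt hk)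
        omega), if_neg hk, zero_mul]

lemma aux_turyn_block_sum (M K : ℕ) (hM : 0 < M) (s r τ : ℕ) (hτ : τ = M * s + r) (hr : r < M)
    (w : ℕ → ℝ) (A B P Q : ℕ → ℝ)
    (hw : ∀ k j, j < M → w (k * M + j) = A k * P j + B k * Q j) :
    rhoR (K * M) w w τ
    = (∑ k ∈ Finset.range (K - s), A k * A (k + s)) * (∑ j ∈ Finset.range (M - r), P j * P (j + r))
    + (∑ k ∈ Finset.range (K - s), A k * B (k + s)) * (∑ j ∈ Finset.range (M - r), P j * Q (j + r))
    + (∑ k ∈ Finset.range (K - s), B k * A (k + s)) * (∑ j ∈ Finset.range (M - r), Q j * P (j + r))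
    + (∑ k ∈ Finset.range (K - s), B k * B (k + s)) * (∑ j ∈ Finset.range (M - r), Q j * Q (j + r))
    + (∑ k ∈ Finset.range (K - (s+1)), A k * A (k + s + 1)) * (∑ j ∈ Finset.range r, P ((M - r) + j) * P j)
    + (∑ k ∈ Finset.range (K - (s+1)), A k * B (k + s + 1)) * (∑ j ∈ Finset.range r, P ((M - r) + j) * Q j)
    + (∑ k ∈ Finset.range (K - (s+1)), B k * A (k + s + 1)) * (∑ j ∈ Finset.range r, Q ((M - r) + j) * P j)
    + (∑ k ∈ Finset.range (K - (s+1)), B k * B (k + s + 1)) * (∑ j ∈ Finset.range r, Q ((M - r) + j) * Q j) := by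
  have hA := aux_block_part K s (Finset.range (M - r)) A B P Q
    (fun j => P (j + r)) (fun j => Q (j + r))
  have hB := aux_block_part K (s+1) (Finset.range r) A B
    (fun j => P ((M - r) + j)) (fun j => Q ((M - r) + j)) P Q
  beta_reduce at hA hB
  simp only [← add_assoc] at hB
  calc rhoR (K * M) w w τ
      = ∑ k ∈ Finset.range K, ∑ j ∈ Finset.range M,
          w (k * M + j) * (if k * M + j + τ < K * M then w (k * M + j + τ) else 0) := by
        rw [aux_rhoR_pad, aux_sum_range_mul]
    _ = ∑ k ∈ Finset.range K,
          ((∑ j ∈ Finset.range (M - r),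
            (A k * P j + B k * Q j) *
              ((if k + s < K then (1:ℝ) else 0) * (A (k + s) * P (j + r) + B (k + s) * Q (j + r))))
          + ∑ j ∈ Finset.range r,
            (A k * P ((M - r) + j) + B k * Q ((M - r) + j)) *
              ((if k + s + 1 < K then (1:ℝ) else 0) *
                (A (k + s + 1) * P j + B (k + s + 1) * Q j))) := by
        refine Finset.sum_congr rfl fun k _ => ?_
        rw [Finset.sum_congr rfl fun j hj => by
          rw [hw k j (Finset.mem_range.1 hj),
            aux_pad_shift M K s r τ hM hτ hr w A B P Q hw k j (Finset.mem_range.1 hj)]]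
        rw [aux_sum_range_split M r hr.le]
        congr 1
        · exact Finset.sum_congr rfl fun j hj => by
            rw [if_pos (by have := Finset.mem_range.1 hj; omega)]
        · refine Finset.sum_congr rfl fun j hj => ?_
          have hjr := Finset.mem_range.1 hj
          rw [if_neg (by omega), show (M - r) + j + r - M = j by omega]
    _ = _ := by
        rw [Finset.sum_add_distrib, hA, hB]
        ring

lemma aux_jsum (M r : ℕ) (p q : ℕ → ℝ) :
    (∑ j ∈ Finset.range (M - r), (p j + q j)/2 * ((p (j+r) + q (j+r))/2))
      + (∑ j ∈ Finset.range (M - r), (q j - p j)/2 * ((q (j+r) - p (j+r))/2))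
      = (rhoR M p p r + rhoR M q q r) / 2 := by
  unfold rhoR
  rw [← Finset.sum_add_distrib, ← Finset.sum_add_distrib, Finset.sum_div]
  exact Finset.sum_congr rfl fun j _ => by ring

lemma aux_jsumB (M r : ℕ) (hr : r ≤ M) (p q : ℕ → ℝ) :
    (∑ j ∈ Finset.range r, (p ((M-r)+j) + q ((M-r)+j))/2 * ((p j + q j)/2))
      + (∑ j ∈ Finset.range r, (q ((M-r)+j) - p ((M-r)+j))/2 * ((q j - p j)/2))
      = (rhoR M p p (M - r) + rhoR M q q (M - r)) / 2 := by
  unfold rhoR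
  rw [show M - (M - r) = r by omega]
  rw [← Finset.sum_add_distrib, ← Finset.sum_add_distrib, Finset.sum_div]
  exact Finset.sum_congr rfl fun j _ => by rw [show j + (M - r) = (M - r) + j by omega]; ring

lemma aux_turyn_autoOK (M K : ℕ) (hM : 0 < M) (p q c d : ℕ → ℝ)
    (hpq : ∀ τ, 1 ≤ τ → rhoR M p p τ + rhoR M q q τ = 0)
    (hcd : ∀ τ, 1 ≤ τ → rhoR K c c τ + rhoR K d d τ = 0) :
    ∀ τ, 1 ≤ τ →
      rhoR (K * M) (turynPair M K p q c d).1 (turynPair M K p q c d).1 τ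
        + rhoR (K * M) (turynPair M K p q c d).2 (turynPair M K p q c d).2 τ = 0 := by
  intro τ hτ
  obtain ⟨s, r, hτeq, hr⟩ : ∃ s r, τ = M * s + r ∧ r < M :=
    ⟨τ / M, τ % M, (Nat.div_add_mod τ M).symm, Nat.mod_lt _ hM⟩
  have hdiv : ∀ k j : ℕ, j < M → (k * M + j) / M = k ∧ (k * M + j) % M = j := by
    intro k j hj
    constructor
    · rw [mul_comm k M, Nat.mul_add_div hM, Nat.div_eq_of_lt hj, add_zero]
    · rw [mul_comm k M, Nat.mul_add_mod, Nat.mod_eq_of_lt hj]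
  have hwE : ∀ k j, j < M → (turynPair M K p q c d).1 (k * M + j)
      = c k * ((p j + q j)/2) + (fun k => -d (K - 1 - k)) k * ((q j - p j)/2) := by
    intro k j hj
    obtain ⟨h1, h2⟩ := hdiv k j hj
    simp only [turynPair, h1, h2]
    ring
  have hwF : ∀ k j, j < M → (turynPair M K p q c d).2 (k * M + j)
      = d k * ((p j + q j)/2) + (fun k => c (K - 1 - k)) k * ((q j - p j)/2) := by
    intro k j hj
    obtain ⟨h1, h2⟩ := hdiv k j hj
    simp only [turynPair, h1, h2]
    ring
  have hE := aux_turyn_block_sum M K hM s r τ hτeq hr _ c (fun k => -d (K - 1 - k))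
    (fun j => (p j + q j)/2) (fun j => (q j - p j)/2) hwE
  have hF := aux_turyn_block_sum M K hM s r τ hτeq hr _ d (fun k => c (K - 1 - k))
    (fun j => (p j + q j)/2) (fun j => (q j - p j)/2) hwF
  beta_reduce at hE hF
  rw [hE, hF]
  -- k-sum identities
  have eAA : ∀ s', (∑ k ∈ Finset.range (K - s'), c k * c (k + s')) = rhoR K c c s' :=
    fun s' => rfl
  have fAA : ∀ s', (∑ k ∈ Finset.range (K - s'), d k * d (k + s')) = rhoR K d d s' :=
    fun s' => rfl
  have eBB : ∀ s', (∑ k ∈ Finset.range (K - s'), -d (K - 1 - k) * -d (K - 1 - (k + s')))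
      = rhoR K d d s' := by
    intro s'
    rw [Finset.sum_congr rfl fun k _ => show -d (K - 1 - k) * -d (K - 1 - (k + s'))
      = d (K - 1 - k) * d (K - 1 - (k + s')) by ring]
    exact aux_rev_corr K s' d d
  have fBB : ∀ s', (∑ k ∈ Finset.range (K - s'), c (K - 1 - k) * c (K - 1 - (k + s')))
      = rhoR K c c s' := fun s' => aux_rev_corr K s' c c
  have cross1 : ∀ s', (∑ k ∈ Finset.range (K - s'), c k * -d (K - 1 - (k + s')))
      + (∑ k ∈ Finset.range (K - s'), d k * c (K - 1 - (k + s'))) = 0 := by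
    intro s'
    rw [Finset.sum_congr rfl fun k _ => show c k * -d (K - 1 - (k + s'))
      = -(c k * d (K - 1 - (k + s'))) by ring, Finset.sum_neg_distrib,
      aux_rev_swap K s' c d]
    ring
  have cross2 : ∀ s', (∑ k ∈ Finset.range (K - s'), -d (K - 1 - k) * c (k + s'))
      + (∑ k ∈ Finset.range (K - s'), c (K - 1 - k) * d (k + s')) = 0 := by
    intro s'
    rw [Finset.sum_congr rfl fun k _ => show -d (K - 1 - k) * c (k + s')
      = -(d (K - 1 - k) * c (k + s')) by ring, Finset.sum_neg_distrib]
    rw [show (∑ k ∈ Finset.range (K - s'), d (K - 1 - k) * c (k + s'))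
      = ∑ k ∈ Finset.range (K - s'), c (K - 1 - k) * d (k + s') from ?_]
    · ring
    · rw [← Finset.sum_range_reflect (fun m => c (K - 1 - m) * d (m + s')) (K - s')]
      refine Finset.sum_congr rfl fun k hk => ?_
      have hk' := Finset.mem_range.1 hk
      rw [show K - 1 - (K - s' - 1 - k) = k + s' by omega,
        show K - s' - 1 - k + s' = K - 1 - k by omega]
      ring

  have eBB1 := eBB (s+1)
  have fBB1 := fBB (s+1)
  have cross1s := cross1 s
  have cross2s := cross2 s
  have cross11 := cross1 (s+1)
  have cross21 := cross2 (s+1)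
  have eAA1 := eAA (s+1)
  have fAA1 := fAA (s+1)
  simp only [← add_assoc] at eBB1 fBB1 cross11 cross21 eAA1 fAA1
  rw [eBB s, eBB1, fBB s, fBB1, eAA s, eAA1, fAA s, fAA1]
  have hjA := aux_jsum M r p q
  have hjB := aux_jsumB M r hr.le p q
  have hB1 : rhoR K c c (s+1) + rhoR K d d (s+1) = 0 := hcd (s+1) (by omega)
  rcases Nat.eq_zero_or_pos s with hs0 | hs1
  · have hr1 : 1 ≤ r := by
      rcases Nat.eq_zero_or_pos r with h0 | h0
      · rw [hs0, h0, Nat.mul_zero, Nat.add_zero] at hτeq; omega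
      · exact h0
    have hpr : rhoR M p p r + rhoR M q q r = 0 := hpq r hr1
    linear_combination
      (∑ j ∈ Finset.range (M - r), (p j + q j)/2 * ((q (j+r) - p (j+r))/2)) * cross1s
      + (∑ j ∈ Finset.range (M - r), (q j - p j)/2 * ((p (j+r) + q (j+r))/2)) * cross2s
      + (∑ j ∈ Finset.range r, (p ((M-r)+j) + q ((M-r)+j))/2 * ((q j - p j)/2)) * cross11
      + (∑ j ∈ Finset.range r, (q ((M-r)+j) - p ((M-r)+j))/2 * ((p j + q j)/2)) * cross21
      + (rhoR K c c s + rhoR K d d s) * hjA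
      + ((rhoR K c c s + rhoR K d d s)/2) * hpr
      + (rhoR K c c (s+1) + rhoR K d d (s+1)) * hjB
      + ((rhoR M p p (M-r) + rhoR M q q (M-r))/2) * hB1
  · have hA0 : rhoR K c c s + rhoR K d d s = 0 := hcd s hs1
    linear_combination
      (∑ j ∈ Finset.range (M - r), (p j + q j)/2 * ((q (j+r) - p (j+r))/2)) * cross1s
      + (∑ j ∈ Finset.range (M - r), (q j - p j)/2 * ((p (j+r) + q (j+r))/2)) * cross2s
      + (∑ j ∈ Finset.range r, (p ((M-r)+j) + q ((M-r)+j))/2 * ((q j - p j)/2)) * cross11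
      + (∑ j ∈ Finset.range r, (q ((M-r)+j) - p ((M-r)+j))/2 * ((p j + q j)/2)) * cross21
      + ((∑ j ∈ Finset.range (M - r), (p j + q j)/2 * ((p (j+r) + q (j+r))/2))
         + ∑ j ∈ Finset.range (M - r), (q j - p j)/2 * ((q (j+r) - p (j+r))/2)) * hA0
      + (rhoR K c c (s+1) + rhoR K d d (s+1)) * hjB
      + ((rhoR M p p (M-r) + rhoR M q q (M-r))/2) * hB1


lemma K26_front : ∀ i, i < 12 → K26a i = K26b i := by
  intro i hi
  interval_cases i <;> rfl

lemma K26_back : ∀ i, 14 ≤ i → i < 26 → K26a i = -K26b i := by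
  intro i h1 h2
  interval_cases i <;> norm_num [K26a, K26b]

lemma K26a_ev0 : K26a 0 = 1 := rfl
lemma K26a_ev1 : K26a 1 = 1 := rfl
lemma K26a_ev2 : K26a 2 = 1 := rfl
lemma K26a_ev3 : K26a 3 = 1 := rfl
lemma K26a_ev4 : K26a 4 = -1 := rfl
lemma K26a_ev5 : K26a 5 = 1 := rfl
lemma K26a_ev6 : K26a 6 = 1 := rfl
lemma K26a_ev7 : K26a 7 = -1 := rfl
lemma K26a_ev8 : K26a 8 = -1 := rfl
lemma K26a_ev9 : K26a 9 = 1 := rfl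
lemma K26a_ev10 : K26a 10 = -1 := rfl
lemma K26a_ev11 : K26a 11 = 1 := rfl
lemma K26a_ev12 : K26a 12 = -1 := rfl
lemma K26a_ev13 : K26a 13 = 1 := rfl
lemma K26a_ev14 : K26a 14 = -1 := rfl
lemma K26a_ev15 : K26a 15 = -1 := rfl
lemma K26a_ev16 : K26a 16 = 1 := rfl
lemma K26a_ev17 : K26a 17 = -1 := rfl
lemma K26a_ev18 : K26a 18 = 1 := rfl
lemma K26a_ev19 : K26a 19 = 1 := rfl
lemma K26a_ev20 : K26a 20 = 1 := rfl
lemma K26a_ev21 : K26a 21 = -1 := rfl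
lemma K26a_ev22 : K26a 22 = -1 := rfl
lemma K26a_ev23 : K26a 23 = 1 := rfl
lemma K26a_ev24 : K26a 24 = 1 := rfl
lemma K26a_ev25 : K26a 25 = 1 := rfl
lemma K26b_ev0 : K26b 0 = 1 := rfl
lemma K26b_ev1 : K26b 1 = 1 := rfl
lemma K26b_ev2 : K26b 2 = 1 := rfl
lemma K26b_ev3 : K26b 3 = 1 := rfl
lemma K26b_ev4 : K26b 4 = -1 := rfl
lemma K26b_ev5 : K26b 5 = 1 := rfl
lemma K26b_ev6 : K26b 6 = 1 := rfl
lemma K26b_ev7 : K26b 7 = -1 := rfl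
lemma K26b_ev8 : K26b 8 = -1 := rfl
lemma K26b_ev9 : K26b 9 = 1 := rfl
lemma K26b_ev10 : K26b 10 = -1 := rfl
lemma K26b_ev11 : K26b 11 = 1 := rfl
lemma K26b_ev12 : K26b 12 = 1 := rfl
lemma K26b_ev13 : K26b 13 = 1 := rfl
lemma K26b_ev14 : K26b 14 = 1 := rfl
lemma K26b_ev15 : K26b 15 = 1 := rfl
lemma K26b_ev16 : K26b 16 = -1 := rfl
lemma K26b_ev17 : K26b 17 = 1 := rfl
lemma K26b_ev18 : K26b 18 = -1 := rfl
lemma K26b_ev19 : K26b 19 = -1 := rfl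
lemma K26b_ev20 : K26b 20 = -1 := rfl
lemma K26b_ev21 : K26b 21 = 1 := rfl
lemma K26b_ev22 : K26b 22 = 1 := rfl
lemma K26b_ev23 : K26b 23 = -1 := rfl
lemma K26b_ev24 : K26b 24 = -1 := rfl
lemma K26b_ev25 : K26b 25 = -1 := rfl

set_option maxHeartbeats 1000000 in
lemma K26_gcp : ∀ τ, 1 ≤ τ → rhoR 26 K26a K26a τ + rhoR 26 K26b K26b τ = 0 := by
  intro τ hτ
  rcases le_or_gt 26 τ with h | h
  · simp [rhoR, Nat.sub_eq_zero_of_le h]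
  · interval_cases τ <;>
    norm_num [rhoR, Finset.sum_range_succ, K26a_ev0, K26a_ev1, K26a_ev2, K26a_ev3, K26a_ev4, K26a_ev5, K26a_ev6, K26a_ev7, K26a_ev8, K26a_ev9, K26a_ev10, K26a_ev11, K26a_ev12, K26a_ev13, K26a_ev14, K26a_ev15, K26a_ev16, K26a_ev17, K26a_ev18, K26a_ev19, K26a_ev20, K26a_ev21, K26a_ev22, K26a_ev23, K26a_ev24, K26a_ev25, K26b_ev0, K26b_ev1, K26b_ev2, K26b_ev3, K26b_ev4, K26b_ev5, K26b_ev6, K26b_ev7, K26b_ev8, K26b_ev9, K26b_ev10, K26b_ev11, K26b_ev12, K26b_ev13, K26b_ev14, K26b_ev15, K26b_ev16, K26b_ev17, K26b_ev18, K26b_ev19, K26b_ev20, K26b_ev21, K26b_ev22, K26b_ev23, K26b_ev24, K26b_ev25]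

lemma aux_ef_small (N τ : ℕ) (hτ1 : 1 ≤ τ) (hτN : τ ≤ N) (a b e f : ℕ → ℝ)
    (he : ∀ i, e i = if i < N then a i else b (N - 1 - (i - N)))
    (hf : ∀ i, f i = if i < N then b i else -a (N - 1 - (i - N)))
    (hab : rhoR N a a τ + rhoR N b b τ = 0) :
    rhoR (2 * N) e e τ + rhoR (2 * N) f f τ = 0 := by
  unfold rhoR
  rw [aux_sum_range_split (2*N-τ) (N-τ) (by omega) (fun k => e k * e (k+τ)),
      aux_sum_range_split (2*N-τ) (N-τ) (by omega) (fun k => f k * f (k+τ)),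
      show 2*N-τ - (N-τ) = N by omega,
      aux_sum_range_split N τ hτN (fun k => e k * e (k+τ)),
      aux_sum_range_split N τ hτN (fun k => f k * f (k+τ))]
  have P1e : (∑ k ∈ Finset.range (N-τ), e k * e (k+τ))
      = ∑ k ∈ Finset.range (N-τ), a k * a (k+τ) :=
    Finset.sum_congr rfl fun k hk => by
      have hk' := Finset.mem_range.1 hk
      rw [he k, he (k+τ), if_pos (by omega), if_pos (by omega)]
  have P1f : (∑ k ∈ Finset.range (N-τ), f k * f (k+τ))
      = ∑ k ∈ Finset.range (N-τ), b k * b (k+τ) :=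
    Finset.sum_congr rfl fun k hk => by
      have hk' := Finset.mem_range.1 hk
      rw [hf k, hf (k+τ), if_pos (by omega), if_pos (by omega)]
  have P2e : (∑ k ∈ Finset.range τ, e ((N-τ)+k) * e ((N-τ)+k+τ))
      = ∑ k ∈ Finset.range τ, a ((N-τ)+k) * b (N-1-k) :=
    Finset.sum_congr rfl fun k hk => by
      have hk' := Finset.mem_range.1 hk
      rw [he ((N-τ)+k), he ((N-τ)+k+τ), if_pos (by omega), if_neg (by omega),
        show (N-τ)+k+τ - N = k by omega]
  have P2f : (∑ k ∈ Finset.range τ, f ((N-τ)+k) * f ((N-τ)+k+τ))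
      = ∑ k ∈ Finset.range τ, b ((N-τ)+k) * -a (N-1-k) :=
    Finset.sum_congr rfl fun k hk => by
      have hk' := Finset.mem_range.1 hk
      rw [hf ((N-τ)+k), hf ((N-τ)+k+τ), if_pos (by omega), if_neg (by omega),
        show (N-τ)+k+τ - N = k by omega]
  have P3e : (∑ k ∈ Finset.range (N-τ), e (N+k) * e (N+k+τ))
      = ∑ k ∈ Finset.range (N-τ), b (N-1-k) * b (N-1-(k+τ)) :=
    Finset.sum_congr rfl fun k hk => by
      have hk' := Finset.mem_range.1 hk
      rw [he (N+k), he (N+k+τ), if_neg (by omega), if_neg (by omega),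
        show N+k - N = k by omega, show N+k+τ - N = k+τ by omega]
  have P3f : (∑ k ∈ Finset.range (N-τ), f (N+k) * f (N+k+τ))
      = ∑ k ∈ Finset.range (N-τ), -a (N-1-k) * -a (N-1-(k+τ)) :=
    Finset.sum_congr rfl fun k hk => by
      have hk' := Finset.mem_range.1 hk
      rw [hf (N+k), hf (N+k+τ), if_neg (by omega), if_neg (by omega),
        show N+k - N = k by omega, show N+k+τ - N = k+τ by omega]
  rw [P1e, P1f, P2e, P2f, P3e, P3f]
  have hrevb : (∑ k ∈ Finset.range (N-τ), b (N-1-k) * b (N-1-(k+τ))) = rhoR N b b τ :=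
    aux_rev_corr N τ b b
  have hreva : (∑ k ∈ Finset.range (N-τ), -a (N-1-k) * -a (N-1-(k+τ))) = rhoR N a a τ := by
    rw [Finset.sum_congr rfl fun k _ => show -a (N-1-k) * -a (N-1-(k+τ))
      = a (N-1-k) * a (N-1-(k+τ)) by ring]
    exact aux_rev_corr N τ a a
  have hX : (∑ k ∈ Finset.range τ, a ((N-τ)+k) * b (N-1-k))
      = ∑ k ∈ Finset.range τ, b ((N-τ)+k) * a (N-1-k) := by
    calc (∑ k ∈ Finset.range τ, a ((N-τ)+k) * b (N-1-k))
        = ∑ k ∈ Finset.range τ, a ((N-τ)+k) * b ((N-τ) + (τ-1-k)) :=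
          Finset.sum_congr rfl fun k hk => by
            have hk' := Finset.mem_range.1 hk
            rw [show (N-τ) + (τ-1-k) = N-1-k by omega]
      _ = ∑ k ∈ Finset.range τ, b ((N-τ)+k) * a ((N-τ) + (τ-1-k)) :=
          aux_swap_conv τ (fun m => a ((N-τ)+m)) (fun m => b ((N-τ)+m))
      _ = ∑ k ∈ Finset.range τ, b ((N-τ)+k) * a (N-1-k) :=
          Finset.sum_congr rfl fun k hk => by
            have hk' := Finset.mem_range.1 hk
            rw [show (N-τ) + (τ-1-k) = N-1-k by omega]
  have hrhoa : (∑ k ∈ Finset.range (N-τ), a k * a (k+τ)) = rhoR N a a τ := rfl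
  have hrhob : (∑ k ∈ Finset.range (N-τ), b k * b (k+τ)) = rhoR N b b τ := rfl
  rw [hrhoa, hrhob, hrevb, hreva]
  have hX2 : (∑ k ∈ Finset.range τ, b ((N-τ)+k) * -a (N-1-k))
      = -∑ k ∈ Finset.range τ, b ((N-τ)+k) * a (N-1-k) := by
    rw [← Finset.sum_neg_distrib]
    exact Finset.sum_congr rfl fun k _ => by ring
  rw [hX, hX2]
  linear_combination 2 * hab

lemma aux_ef_large (N τ : ℕ) (hτ : N ≤ τ) (a b e f : ℕ → ℝ)
    (he : ∀ i, e i = if i < N then a i else b (N - 1 - (i - N)))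
    (hf : ∀ i, f i = if i < N then b i else -a (N - 1 - (i - N))) :
    rhoR (2 * N) e e τ + rhoR (2 * N) f f τ = 0 := by
  unfold rhoR
  have h1 : (∑ k ∈ Finset.range (2*N-τ), e k * e (k+τ))
      = ∑ k ∈ Finset.range (2*N-τ), a k * b ((2*N-τ) - 1 - k) :=
    Finset.sum_congr rfl fun k hk => by
      have hk' := Finset.mem_range.1 hk
      rw [he k, he (k+τ), if_pos (by omega), if_neg (by omega),
        show N - 1 - (k + τ - N) = (2*N-τ) - 1 - k by omega]
  have h2 : (∑ k ∈ Finset.range (2*N-τ), f k * f (k+τ))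
      = ∑ k ∈ Finset.range (2*N-τ), b k * -a ((2*N-τ) - 1 - k) :=
    Finset.sum_congr rfl fun k hk => by
      have hk' := Finset.mem_range.1 hk
      rw [hf k, hf (k+τ), if_pos (by omega), if_neg (by omega),
        show N - 1 - (k + τ - N) = (2*N-τ) - 1 - k by omega]
  rw [h1, h2]
  have h3 := aux_swap_conv (2*N-τ) a b
  have h4 : (∑ k ∈ Finset.range (2*N-τ), b k * -a ((2*N-τ) - 1 - k))
      = -∑ k ∈ Finset.range (2*N-τ), b k * a ((2*N-τ) - 1 - k) := by
    rw [← Finset.sum_neg_distrib]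
    exact Finset.sum_congr rfl fun k _ => by ring
  rw [h4]
  linear_combination h3

lemma aux_ef_cross_large (N τ : ℕ) (hτ : N ≤ τ) (a b e f : ℕ → ℝ)
    (he : ∀ i, e i = if i < N then a i else b (N - 1 - (i - N)))
    (hf : ∀ i, f i = if i < N then b i else -a (N - 1 - (i - N)))
    (heq : ∀ i, i < 2*N - τ → a i = b i) :
    rhoR (2 * N) e f τ + rhoR (2 * N) f e τ = 0 := by
  unfold rhoR
  rw [← Finset.sum_add_distrib]
  rw [Finset.sum_congr rfl fun k hk => ?_, Finset.sum_const_zero]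
  have hk' := Finset.mem_range.1 hk
  rw [he k, hf k, he (k+τ), hf (k+τ), if_pos (by omega : k < N), if_pos (by omega : k < N),
    if_neg (by omega : ¬ k+τ < N), if_neg (by omega : ¬ k+τ < N),
    show N - 1 - (k + τ - N) = (2*N-τ) - 1 - k by omega,
    heq k (by omega), heq ((2*N-τ) - 1 - k) (by omega)]
  ring


lemma aux_rhoC_expand (N : ℕ) (hN : 1 ≤ N) (τ : ℕ) (hτ1 : 1 ≤ τ) (hτ2 : τ ≤ 2*N)
    (w1 w2 : ℕ → ℝ) (xa ya xb yb : ℂ) (u1 u2 : ℕ → ℂ)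
    (hu1 : ∀ i, u1 i = if i = 0 then xa else if i ≤ 2*N then ((w1 (i-1) : ℝ) : ℂ) else ya)
    (hu2 : ∀ i, u2 i = if i = 0 then xb else if i ≤ 2*N then ((w2 (i-1) : ℝ) : ℂ) else yb) :
    rhoC (2*N+2) u1 u2 τ
      = xa * ((w2 (τ-1) : ℝ) : ℂ) + ((rhoR (2*N) w1 w2 τ : ℝ) : ℂ)
        + ((w1 (2*N - τ) : ℝ) : ℂ) * (starRingEnd ℂ) yb := by
  unfold rhoC
  rw [show 2*N+2-τ = (2*N-τ)+1+1 by omega, Finset.sum_range_succ, Finset.sum_range_succ']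
  have hlast : u1 ((2*N-τ)+1) * (starRingEnd ℂ) (u2 ((2*N-τ)+1+τ))
      = ((w1 (2*N-τ) : ℝ) : ℂ) * (starRingEnd ℂ) yb := by
    rw [hu1, hu2, if_neg (by omega : ¬ (2*N-τ)+1 = 0), if_pos (by omega : (2*N-τ)+1 ≤ 2*N),
      if_neg (by omega : ¬ (2*N-τ)+1+τ = 0), if_neg (by omega : ¬ (2*N-τ)+1+τ ≤ 2*N),
      show (2*N-τ)+1-1 = 2*N-τ by omega]
  have hfirst : u1 0 * (starRingEnd ℂ) (u2 (0+τ)) = xa * ((w2 (τ-1) : ℝ) : ℂ) := by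
    rw [hu1, hu2, if_pos rfl, if_neg (by omega : ¬ 0+τ = 0), if_pos (by omega : 0+τ ≤ 2*N),
      show 0+τ-1 = τ-1 by omega, Complex.conj_ofReal]
  have hmid : (∑ k ∈ Finset.range (2*N-τ), u1 (k+1) * (starRingEnd ℂ) (u2 (k+1+τ)))
      = ((rhoR (2*N) w1 w2 τ : ℝ) : ℂ) := by
    unfold rhoR
    push_cast
    refine Finset.sum_congr rfl fun k hk => ?_
    have hk' := Finset.mem_range.1 hk
    rw [hu1, hu2, if_neg (by omega : ¬ k+1 = 0), if_pos (by omega : k+1 ≤ 2*N),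
      if_neg (by omega : ¬ k+1+τ = 0), if_pos (by omega : k+1+τ ≤ 2*N),
      show k+1-1 = k by omega, show k+1+τ-1 = k+τ by omega, Complex.conj_ofReal]
  rw [hlast, hfirst, hmid]
  ring

lemma aux_inv (γ : ℕ) (P : ℕ → (ℕ → ℝ) × (ℕ → ℝ))
    (hP1 : P 1 = (K26a, K26b))
    (hPrec : ∀ j, 1 ≤ j → j < γ →
      P (j + 1) = turynPair 26 (26 ^ j) K26a K26b (P j).1 (P j).2) :
    ∀ j, 1 ≤ j → j ≤ γ →
      (∀ τ, 1 ≤ τ → rhoR (26^j) (P j).1 (P j).1 τ + rhoR (26^j) (P j).2 (P j).2 τ = 0) ∧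
      (∀ i, i < 12 * 26^(j-1) → (P j).1 i = (P j).2 i) ∧
      (∀ i, 26^j - 12 * 26^(j-1) ≤ i → i < 26^j → (P j).1 i = -(P j).2 i) := by
  intro j
  induction j with
  | zero => intro h; omega
  | succ j ih =>
    intro h1 h2
    rcases Nat.eq_zero_or_pos j with hj0 | hj1
    · subst hj0
      rw [hP1]
      refine ⟨?_, ?_, ?_⟩
      · intro τ hτ
        rw [pow_one]
        exact K26_gcp τ hτ
      · intro i hi
        norm_num at hi
        exact K26_front i hi
      · intro i hi1 hi2
        norm_num at hi1 hi2
        exact K26_back i (by omega) hi2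
    · obtain ⟨hauto, hE1, hE2⟩ := ih hj1 (by omega)
      have hPrec' := hPrec j hj1 (by omega)
      have hE0 : 0 < 26^(j-1) := pow_pos (by norm_num) _
      have hKj : 26^j = 26 * 26^(j-1) := by
        calc 26^j = 26^(j-1+1) := by rw [show j - 1 + 1 = j by omega]
          _ = 26^(j-1) * 26 := pow_succ 26 (j-1)
          _ = 26 * 26^(j-1) := by ring
      have hKj1 : 26^(j+1) = 676 * 26^(j-1) := by
        rw [pow_succ, hKj]; ring
      refine ⟨?_, ?_, ?_⟩
      · intro τ hτ
        rw [hPrec', pow_succ]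
        exact aux_turyn_autoOK 26 (26^j) (by norm_num) K26a K26b (P j).1 (P j).2
          K26_gcp hauto τ hτ
      · intro i hi
        simp only [Nat.add_sub_cancel] at hi
        rw [hPrec']
        simp only [turynPair]
        have hdlt : i / 26 < 12 * 26^(j-1) :=
          (Nat.div_lt_iff_lt_mul (by norm_num)).2 (by omega)
        have h1' := hE1 (i / 26) hdlt
        have h2' := hE2 (26^j - 1 - i / 26) (by omega) (by omega)
        rw [h1', h2']
        ring
      · intro i hi1 hi2
        simp only [Nat.add_sub_cancel] at hi1
        rw [hPrec']
        simp only [turynPair]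
        have hdge : 26^j - 12 * 26^(j-1) ≤ i / 26 :=
          (Nat.le_div_iff_mul_le (by norm_num)).2 (by omega)
        have hdlt : i / 26 < 26^j :=
          (Nat.div_lt_iff_lt_mul (by norm_num)).2 (by omega)
        have h1' := hE2 (i / 26) hdge hdlt
        have h2' := hE1 (26^j - 1 - i / 26) (by omega)
        rw [h1', h2']
        ring

/-- Theorem 3 of the paper, case `N = 26^γ`: let `(a, b)` be the binary GCP
of length `N = 26^γ` obtained by iterating Turyn's construction on the kernel `K₂₆`,
put `c_i = b_{N-1-i}`, `d_i = -a_{N-1-i}`, `e = a‖c`, `f = b‖d` (length `2N`), and let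
`x₀, x₁, y₀, y₁` be unimodular complex numbers with `x₀ - conj y₁ = 0`,
`x₁ + conj y₀ = 0`, `x₀ = x₁`, `conj y₀ = -conj y₁`.  Then
`g = (x₀, e₀, …, e_{2N-1}, y₀)` and `h = (x₁, f₀, …, f_{2N-1}, y₁)` form a
`(2N+2, 12N/26+1)`-CZCP. -/
theorem stmt_8 (γ : ℕ) (hγ : 1 ≤ γ)
    (P : ℕ → (ℕ → ℝ) × (ℕ → ℝ))
    (hP1 : P 1 = (K26a, K26b))
    (hPrec : ∀ j, 1 ≤ j → j < γ →
      P (j + 1) = turynPair 26 (26 ^ j) K26a K26b (P j).1 (P j).2)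
    (N : ℕ) (hN : N = 26 ^ γ)
    (a b : ℕ → ℝ) (ha : a = (P γ).1) (hb : b = (P γ).2)
    (e f : ℕ → ℝ)
    (he : ∀ i, e i = if i < N then a i else b (N - 1 - (i - N)))
    (hf : ∀ i, f i = if i < N then b i else -a (N - 1 - (i - N)))
    (x0 x1 y0 y1 : ℂ)
    (hx0 : ‖x0‖ = 1) (hx1 : ‖x1‖ = 1)
    (hy0 : ‖y0‖ = 1) (hy1 : ‖y1‖ = 1)
    (cc1 : x0 - (starRingEnd ℂ) y1 = 0) (cc2 : x1 + (starRingEnd ℂ) y0 = 0)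
    (cc3 : x0 = x1) (cc4 : (starRingEnd ℂ) y0 = -(starRingEnd ℂ) y1)
    (g h : ℕ → ℂ)
    (hg : ∀ i, g i = if i = 0 then x0 else if i ≤ 2 * N then ((e (i - 1) : ℝ) : ℂ) else y0)
    (hh : ∀ i, h i = if i = 0 then x1 else if i ≤ 2 * N then ((f (i - 1) : ℝ) : ℂ) else y1) :
    IsCZCP (2 * N + 2) (12 * N / 26 + 1) g h := by
  obtain ⟨H1, H2, -⟩ := aux_inv γ P hP1 hPrec γ hγ le_rfl
  rw [← ha, ← hb] at H1 H2
  rw [← hN] at H1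
  -- numeric facts
  have hE0 : 0 < 26 ^ (γ - 1) := pow_pos (by norm_num) _
  have hNE : N = 26 * 26 ^ (γ - 1) := by
    rw [hN]
    calc 26^γ = 26^(γ-1+1) := by rw [show γ - 1 + 1 = γ by omega]
      _ = 26^(γ-1) * 26 := pow_succ 26 (γ-1)
      _ = 26 * 26^(γ-1) := by ring
  have hZ : 12 * N / 26 = 12 * 26 ^ (γ - 1) := by
    rw [hNE, show 12 * (26 * 26^(γ-1)) = 26 * (12 * 26^(γ-1)) by ring,
      Nat.mul_div_cancel_left _ (by norm_num : 0 < 26)]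
  rw [hZ]
  set F := 12 * 26 ^ (γ - 1) with hF
  have hFN : 2 * F + 2 ≤ N := by omega
  have hN1 : 1 ≤ N := by omega
  -- boundary constants
  have hcy0 : (starRingEnd ℂ) y0 = -x0 := by linear_combination cc2 + cc3
  have hcy1 : (starRingEnd ℂ) y1 = x0 := by linear_combination -cc1
  -- boundary values of e and f
  have heA : ∀ i, i < N → e i = a i := fun i hi => by rw [he i, if_pos hi]
  have hfA : ∀ i, i < N → f i = b i := fun i hi => by rw [hf i, if_pos hi]
  have heB : ∀ i, N ≤ i → i < 2*N → e i = b (2*N - 1 - i) := fun i hi1 hi2 => by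
    rw [he i, if_neg (by omega), show N - 1 - (i - N) = 2*N - 1 - i by omega]
  have hfB : ∀ i, N ≤ i → i < 2*N → f i = -a (2*N - 1 - i) := fun i hi1 hi2 => by
    rw [hf i, if_neg (by omega), show N - 1 - (i - N) = 2*N - 1 - i by omega]
  constructor
  · -- C1
    rintro τ (⟨ht1, ht2⟩ | ⟨ht1, ht2⟩)
    · -- small shifts
      have hτ2N : τ ≤ 2*N := by omega
      rw [aux_rhoC_expand N hN1 τ ht1 hτ2N e e x0 y0 x0 y0 g g hg hg,
          aux_rhoC_expand N hN1 τ ht1 hτ2N f f x1 y1 x1 y1 h h hh hh]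
      have hee : rhoR (2*N) e e τ + rhoR (2*N) f f τ = 0 :=
        aux_ef_small N τ ht1 (by omega) a b e f he hf (H1 τ ht1)
      have h1 : e (τ-1) = a (τ-1) := heA _ (by omega)
      have h2 : f (τ-1) = b (τ-1) := hfA _ (by omega)
      have h3 : e (2*N-τ) = b (τ-1) := by
        rw [heB (2*N-τ) (by omega) (by omega), show 2*N-1-(2*N-τ) = τ-1 by omega]
      have h4 : f (2*N-τ) = -a (τ-1) := by
        rw [hfB (2*N-τ) (by omega) (by omega), show 2*N-1-(2*N-τ) = τ-1 by omega]
      rw [h1, h2, h3, h4, hcy0, hcy1, ← cc3]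
      have hc : ((rhoR (2*N) e e τ : ℝ) : ℂ) + ((rhoR (2*N) f f τ : ℝ) : ℂ) = 0 := by
        rw [← Complex.ofReal_add, hee, Complex.ofReal_zero]
      push_cast
      linear_combination hc
    · -- large shifts
      have hτup : τ ≤ 2*N+1 := by omega
      rcases eq_or_lt_of_le hτup with hE | hlt
      · -- τ = 2N+1
        have h2 : rhoC (2*N+2) g g τ = x0 * (starRingEnd ℂ) y0 := by
          unfold rhoC
          rw [hE, show 2*N+2-(2*N+1) = 1 by omega, Finset.sum_range_one, hg 0, hg (0+(2*N+1)),
            if_pos rfl, if_neg (by omega), if_neg (by omega)]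
        have h3 : rhoC (2*N+2) h h τ = x1 * (starRingEnd ℂ) y1 := by
          unfold rhoC
          rw [hE, show 2*N+2-(2*N+1) = 1 by omega, Finset.sum_range_one, hh 0, hh (0+(2*N+1)),
            if_pos rfl, if_neg (by omega), if_neg (by omega)]
        rw [h2, h3, hcy0, hcy1, ← cc3]
        ring
      · -- N+2 ≤ τ ≤ 2N
        have hτ2N : τ ≤ 2*N := by omega
        have hτlo : 2*N+1-F ≤ τ := by omega
        rw [aux_rhoC_expand N hN1 τ (by omega) hτ2N e e x0 y0 x0 y0 g g hg hg,
            aux_rhoC_expand N hN1 τ (by omega) hτ2N f f x1 y1 x1 y1 h h hh hh]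
        have hee : rhoR (2*N) e e τ + rhoR (2*N) f f τ = 0 :=
          aux_ef_large N τ (by omega) a b e f he hf
        have h1 : e (τ-1) = b (2*N-τ) := by
          rw [heB (τ-1) (by omega) (by omega), show 2*N-1-(τ-1) = 2*N-τ by omega]
        have h2 : f (τ-1) = -a (2*N-τ) := by
          rw [hfB (τ-1) (by omega) (by omega), show 2*N-1-(τ-1) = 2*N-τ by omega]
        have h3 : e (2*N-τ) = a (2*N-τ) := heA _ (by omega)
        have h4 : f (2*N-τ) = b (2*N-τ) := hfA _ (by omega)
        have h5 : a (2*N-τ) = b (2*N-τ) := H2 _ (by omega)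
        have hc : ((rhoR (2*N) e e τ : ℝ) : ℂ) + ((rhoR (2*N) f f τ : ℝ) : ℂ) = 0 := by
          rw [← Complex.ofReal_add, hee, Complex.ofReal_zero]
        rw [h1, h2, h3, h4, h5, hcy0, hcy1, ← cc3]
        push_cast
        linear_combination hc
  · -- C2
    rintro τ ⟨ht1, ht2⟩
    have hτup : τ ≤ 2*N+1 := by omega
    rcases eq_or_lt_of_le hτup with hE | hlt
    · have h2 : rhoC (2*N+2) g h τ = x0 * (starRingEnd ℂ) y1 := by
        unfold rhoC
        rw [hE, show 2*N+2-(2*N+1) = 1 by omega, Finset.sum_range_one, hg 0, hh (0+(2*N+1)),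
          if_pos rfl, if_neg (by omega), if_neg (by omega)]
      have h3 : rhoC (2*N+2) h g τ = x1 * (starRingEnd ℂ) y0 := by
        unfold rhoC
        rw [hE, show 2*N+2-(2*N+1) = 1 by omega, Finset.sum_range_one, hh 0, hg (0+(2*N+1)),
          if_pos rfl, if_neg (by omega), if_neg (by omega)]
      rw [h2, h3, hcy0, hcy1, ← cc3]
      ring
    · have hτ2N : τ ≤ 2*N := by omega
      rw [aux_rhoC_expand N hN1 τ (by omega) hτ2N e f x0 y0 x1 y1 g h hg hh,
          aux_rhoC_expand N hN1 τ (by omega) hτ2N f e x1 y1 x0 y0 h g hh hg]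
      have hee : rhoR (2*N) e f τ + rhoR (2*N) f e τ = 0 :=
        aux_ef_cross_large N τ (by omega) a b e f he hf
          (fun i hi => H2 i (by omega))
      have h1 : e (τ-1) = b (2*N-τ) := by
        rw [heB (τ-1) (by omega) (by omega), show 2*N-1-(τ-1) = 2*N-τ by omega]
      have h2 : f (τ-1) = -a (2*N-τ) := by
        rw [hfB (τ-1) (by omega) (by omega), show 2*N-1-(τ-1) = 2*N-τ by omega]
      have h3 : e (2*N-τ) = a (2*N-τ) := heA _ (by omega)
      have h4 : f (2*N-τ) = b (2*N-τ) := hfA _ (by omega)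
      have hc : ((rhoR (2*N) e f τ : ℝ) : ℂ) + ((rhoR (2*N) f e τ : ℝ) : ℂ) = 0 := by
        rw [← Complex.ofReal_add, hee, Complex.ofReal_zero]
      rw [h1, h2, h3, h4, hcy0, hcy1, ← cc3]
      push_cast
      linear_combination hc
end
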